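/- arXiv:1905.04934 — 3 statements merged into one kernel-verified Lean document; each statement's English description precedes it below -/
import Mathlib

section
/- Let g : ℝ^d → ℂ be continuous with ‖g‖_{W(L^∞,ℓ¹)} < ∞, and let M ∈ GL(d,ℝ). Then the map D_{M,g} : c = (c_k)_{k∈ℤ^d} ↦ ∑_{k∈ℤ^d} c_k·T_{Mk}g is bounded from ℓ^∞(ℤ^d) into L^∞(ℝ^d), with the series converging pointwise absolutely. Furthermore, for every p ∈ [1,∞], the map D_{M,g} : ℓ^p(ℤ^d) → L^p(ℝ^d) is well-defined and bounded, with operator norm ‖D_{M,g}‖_{ℓ^p→L^p} ≤ |det M|^{1/p}·‖g∘M‖_{W(L^∞,ℓ¹)}. -/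
open MeasureTheory Matrix
open scoped ENNReal NNReal

noncomputable section

/-- `ℝ^d` with the Euclidean norm. -/
abbrev Ed (d : ℕ) : Type := EuclideanSpace ℝ (Fin d)

/-- An integer vector, viewed as an element of `ℝ^d`. -/
def zVec {d : ℕ} (k : Fin d → ℤ) : Ed d := WithLp.toLp 2 (fun i => (k i : ℝ))

/-- A matrix acting on `ℝ^d`. -/
def matVec {d : ℕ} (A : Matrix (Fin d) (Fin d) ℝ) (x : Ed d) : Ed d :=
  WithLp.toLp 2 (fun i => ∑ j, A i j * x j)

/-- The Wiener amalgam norm `‖f‖_{W(L^∞, ℓ¹)} = ∑_{n ∈ ℤ^d} ‖f·𝟙_{n+[0,1]^d}‖_{L^∞}`. -/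
def amalgamNorm {d : ℕ} (f : Ed d → ℂ) : ℝ≥0∞ :=
  ∑' n : Fin d → ℤ,
    ⨆ x ∈ {x : Ed d | ∀ i, x i ∈ Set.Icc (n i : ℝ) ((n i : ℝ) + 1)}, (‖f x‖₊ : ℝ≥0∞)

/-- The (unweighted) `ℓ^p` norm of a family of complex numbers, `p ∈ [1,∞]`. -/
def lqNorm {κ : Type*} (q : ℝ≥0∞) (c : κ → ℂ) : ℝ≥0∞ :=
  if q = ∞ then ⨆ k, (‖c k‖₊ : ℝ≥0∞)
  else (∑' k, (‖c k‖₊ : ℝ≥0∞) ^ q.toReal) ^ (1 / q.toReal)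

namespace Stmt2
variable {d : ℕ}

/-- The local sup of `‖f‖` on the closed unit cube based at `n`. -/
def Asup (f : Ed d → ℂ) (n : Fin d → ℤ) : ℝ≥0∞ :=
  ⨆ x ∈ {x : Ed d | ∀ i, x i ∈ Set.Icc (n i : ℝ) ((n i : ℝ) + 1)}, (‖f x‖₊ : ℝ≥0∞)

lemma amalgam_eq (f : Ed d → ℂ) : amalgamNorm f = ∑' n, Asup f n := rfl

lemma matVec_eq_lin (A : Matrix (Fin d) (Fin d) ℝ) (x : Ed d) :
    matVec A x = Matrix.toEuclideanLin A x := rfl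

lemma matVec_sub (A : Matrix (Fin d) (Fin d) ℝ) (x y : Ed d) :
    matVec A (x - y) = matVec A x - matVec A y := by
  rw [matVec_eq_lin, map_sub]; rfl

lemma matVec_matVec (A B : Matrix (Fin d) (Fin d) ℝ) (x : Ed d) :
    matVec A (matVec B x) = matVec (A * B) x := by
  ext i
  show ∑ j, A i j * (∑ l, B j l * x l) = ∑ l, (∑ j, A i j * B j l) * x l
  simp only [Finset.mul_sum, Finset.sum_mul]
  rw [Finset.sum_comm]
  exact Finset.sum_congr rfl fun l _ => Finset.sum_congr rfl fun j _ => by ring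

lemma matVec_one (x : Ed d) : matVec 1 x = x := by
  ext i
  show ∑ j, (1 : Matrix (Fin d) (Fin d) ℝ) i j * x j = x i
  simp [Matrix.one_apply, ite_mul]

lemma continuous_matVec (A : Matrix (Fin d) (Fin d) ℝ) : Continuous (matVec A) := by
  have : matVec A = fun x => Matrix.toEuclideanLin A x := rfl
  rw [this]
  exact (Matrix.toEuclideanLin A).continuous_of_finiteDimensional

lemma det_toEuclideanLin (A : Matrix (Fin d) (Fin d) ℝ) :
    LinearMap.det (Matrix.toEuclideanLin A) = A.det := by
  have h : Matrix.toEuclideanLin A =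
      (((WithLp.linearEquiv 2 ℝ (Fin d → ℝ)).symm :
          (Fin d → ℝ) →ₗ[ℝ] Ed d) ∘ₗ (Matrix.toLin' A) ∘ₗ
        (((WithLp.linearEquiv 2 ℝ (Fin d → ℝ)).symm.symm :
          Ed d →ₗ[ℝ] (Fin d → ℝ)))) := rfl
  rw [h, LinearMap.det_conj, LinearMap.det_toLin']

/-- Change of variables for an invertible matrix. -/
lemma lintegral_matVec (A : Matrix (Fin d) (Fin d) ℝ) (hA : A.det ≠ 0) (φ : Ed d → ℝ≥0∞)
    (hφ : Measurable φ) :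
    ∫⁻ x, φ (matVec A x) ∂(volume) = ENNReal.ofReal |A.det⁻¹| * ∫⁻ y, φ y := by
  have hdet := det_toEuclideanLin A
  have hmap := Measure.map_linearMap_addHaar_eq_smul_addHaar
    (volume : Measure (Ed d)) (f := Matrix.toEuclideanLin A) (by rw [hdet]; exact hA)
  rw [hdet] at hmap
  have hm : Measurable (fun x => Matrix.toEuclideanLin A x) :=
    (Matrix.toEuclideanLin A).continuous_of_finiteDimensional.measurable
  calc ∫⁻ x, φ (matVec A x) ∂volume
      = ∫⁻ y, φ y ∂(volume.map (Matrix.toEuclideanLin A)) := (lintegral_map hφ hm).symm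
    _ = ENNReal.ofReal |A.det⁻¹| * ∫⁻ y, φ y := by rw [hmap]; simp [lintegral_smul_measure]

lemma nnnorm_le_Asup (f : Ed d → ℂ) (x : Ed d) :
    (‖f x‖₊ : ℝ≥0∞) ≤ Asup f (fun i => ⌊x i⌋) := by
  refine le_biSup (f := fun y : Ed d => (‖f y‖₊ : ℝ≥0∞)) ?_
  intro i
  exact ⟨Int.floor_le _, by push_cast; linarith [Int.lt_floor_add_one (x i)]⟩

lemma sub_zVec_apply (y : Ed d) (k : Fin d → ℤ) (i : Fin d) :
    (y - zVec k) i = y i - (k i : ℝ) := rfl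

/-- Pointwise summing of translates is controlled by the amalgam norm. -/
lemma tsum_translates_le (f : Ed d → ℂ) (y : Ed d) :
    ∑' k : Fin d → ℤ, (‖f (y - zVec k)‖₊ : ℝ≥0∞) ≤ amalgamNorm f := by
  have h1 : ∀ k : Fin d → ℤ, (‖f (y - zVec k)‖₊ : ℝ≥0∞)
      ≤ Asup f ((fun i => ⌊y i⌋) - k) := by
    intro k
    have := nnnorm_le_Asup f (y - zVec k)
    convert this using 2
    funext i
    rw [sub_zVec_apply]
    simp [Int.floor_sub_intCast]
  calc ∑' k : Fin d → ℤ, (‖f (y - zVec k)‖₊ : ℝ≥0∞)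
      ≤ ∑' k : Fin d → ℤ, Asup f ((fun i => ⌊y i⌋) - k) := ENNReal.tsum_le_tsum h1
    _ = ∑' n, Asup f n := (Equiv.subLeft (fun i => ⌊y i⌋)).tsum_eq (Asup f)
    _ = amalgamNorm f := rfl

/-- the half-open cube -/
def Ubox (n : Fin d → ℤ) : Set (Ed d) := {x | ∀ i, x i ∈ Set.Ico (n i : ℝ) ((n i : ℝ) + 1)}

lemma Ubox_measurable (n : Fin d → ℤ) : MeasurableSet (Ubox n) := by
  have : Ubox n = ⋂ i, (fun x : Ed d => x i) ⁻¹' Set.Ico (n i : ℝ) ((n i : ℝ) + 1) := by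
    ext x; simp [Ubox]
  rw [this]
  exact MeasurableSet.iInter fun i =>
    ((measurable_pi_apply i).comp (MeasurableEquiv.toLp 2 (Fin d → ℝ)).symm.measurable)
      measurableSet_Ico

lemma Ubox_volume (n : Fin d → ℤ) : volume (Ubox n) = 1 := by
  have h := (EuclideanSpace.volume_preserving_symm_measurableEquiv_toLp (Fin d)).measure_preimage
    (s := Set.pi Set.univ (fun i => Set.Ico (n i : ℝ) ((n i : ℝ) + 1)))
    (MeasurableSet.univ_pi (fun i => measurableSet_Ico)).nullMeasurableSet
  have he : (MeasurableEquiv.toLp 2 (Fin d → ℝ)).symm ⁻¹'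
      (Set.pi Set.univ (fun i => Set.Ico (n i : ℝ) ((n i : ℝ) + 1))) = Ubox n := by
    ext x; simp [Set.mem_pi, Ubox]
  rw [he] at h
  rw [h, volume_pi_pi]
  simp

lemma Ubox_disjoint : Pairwise (Function.onFun Disjoint (fun n : Fin d → ℤ => Ubox n)) := by
  intro n m hnm
  refine Set.disjoint_left.mpr fun x hx hx' => hnm ?_
  funext i
  have h1 := hx i; have h2 := hx' i
  have e1 : ⌊x i⌋ = n i := Int.floor_eq_iff.mpr ⟨h1.1, h1.2⟩
  have e2 : ⌊x i⌋ = m i := Int.floor_eq_iff.mpr ⟨h2.1, h2.2⟩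
  rw [← e1, ← e2]

lemma Ubox_union : (⋃ n : Fin d → ℤ, Ubox n) = Set.univ := by
  refine Set.eq_univ_of_forall fun x => Set.mem_iUnion.mpr ⟨fun i => ⌊x i⌋, fun i =>
    ⟨Int.floor_le _, by push_cast; exact Int.lt_floor_add_one (x i)⟩⟩

lemma mem_Ubox_le_Asup (f : Ed d → ℂ) (n : Fin d → ℤ) {x : Ed d} (hx : x ∈ Ubox n) :
    (‖f x‖₊ : ℝ≥0∞) ≤ Asup f n := by
  refine le_biSup (f := fun y : Ed d => (‖f y‖₊ : ℝ≥0∞)) ?_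
  intro i
  exact ⟨(hx i).1, le_of_lt (hx i).2⟩

/-- The `L¹`-norm is controlled by the amalgam norm. -/
lemma lintegral_nnnorm_le (f : Ed d → ℂ) (hf : Continuous f) :
    ∫⁻ x, (‖f x‖₊ : ℝ≥0∞) ∂volume ≤ amalgamNorm f := by
  rw [amalgam_eq]
  have hmeas : Measurable fun x : Ed d => (‖f x‖₊ : ℝ≥0∞) :=
    hf.measurable.nnnorm.coe_nnreal_ennreal
  calc ∫⁻ x, (‖f x‖₊ : ℝ≥0∞) ∂volume
      = ∫⁻ x in ⋃ n : Fin d → ℤ, Ubox n, (‖f x‖₊ : ℝ≥0∞) ∂volume := by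
        rw [Ubox_union, setLIntegral_univ]
    _ = ∑' n : Fin d → ℤ, ∫⁻ x in Ubox n, (‖f x‖₊ : ℝ≥0∞) ∂volume :=
        lintegral_iUnion Ubox_measurable Ubox_disjoint _
    _ ≤ ∑' n : Fin d → ℤ, Asup f n := by
        refine ENNReal.tsum_le_tsum fun n => ?_
        calc ∫⁻ x in Ubox n, (‖f x‖₊ : ℝ≥0∞) ∂volume
            ≤ ∫⁻ _ in Ubox n, Asup f n ∂volume :=
              setLIntegral_mono' (Ubox_measurable n) (fun x hx => mem_Ubox_le_Asup f n hx)
          _ = Asup f n := by rw [setLIntegral_const, Ubox_volume, mul_one]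

/-- integer sandwich for floors -/
lemma floor_mem_Icc {S : ℝ} (r t : ℝ) (h : |r - t| ≤ S) :
    ⌊r⌋ ∈ Finset.Icc (⌊t⌋ - (⌈S⌉ + 1)) (⌊t⌋ + (⌈S⌉ + 1)) := by
  rw [abs_le] at h
  have h1 := Int.floor_le r
  have h2 := Int.lt_floor_add_one r
  have h3 := Int.floor_le t
  have h4 := Int.lt_floor_add_one t
  have h5 := Int.le_ceil S
  refine Finset.mem_Icc.mpr ⟨?_, ?_⟩
  · have : ((⌊t⌋ - (⌈S⌉ + 1) : ℤ) : ℝ) < (⌊r⌋ : ℝ) := by push_cast; linarith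
    exact le_of_lt (by exact_mod_cast this)
  · have : ((⌊r⌋ : ℤ) : ℝ) ≤ ((⌊t⌋ + (⌈S⌉ + 1) : ℤ) : ℝ) := by push_cast; linarith
    exact_mod_cast this

section Cov
variable (g : Ed d → ℂ) (M : Matrix (Fin d) (Fin d) ℝ) (hM : IsUnit M.det)

def S1 : ℝ := ∑ i, ∑ j, |M i j|
def K1 : ℤ := ⌈S1 (d := d) M⌉ + 1
def Ffl : (Fin d → ℤ) → (Fin d → ℤ) := fun n i => ⌊matVec M (zVec n) i⌋
def Bbox : Finset (Fin d → ℤ) := Fintype.piFinset (fun _ => Finset.Icc (-(K1 (d := d) M)) (K1 M))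

lemma rowsum_le (i : Fin d) : ∑ j, |M i j| ≤ S1 (d := d) M :=
  Finset.single_le_sum (f := fun i => ∑ j, |M i j|)
    (fun i _ => Finset.sum_nonneg fun j _ => abs_nonneg _) (Finset.mem_univ i)

lemma cube_dist_le (n : Fin d → ℤ) {x : Ed d}
    (hx : x ∈ {x : Ed d | ∀ i, x i ∈ Set.Icc (n i : ℝ) ((n i : ℝ) + 1)}) (i : Fin d) :
    |matVec M x i - matVec M (zVec n) i| ≤ S1 (d := d) M := by
  have : matVec M x i - matVec M (zVec n) i = ∑ j, M i j * (x j - (n j : ℝ)) := by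
    show (∑ j, M i j * x j) - (∑ j, M i j * zVec n j) = _
    rw [← Finset.sum_sub_distrib]
    exact Finset.sum_congr rfl fun j _ => by simp only [zVec]; ring
  rw [this]
  refine le_trans (Finset.abs_sum_le_sum_abs _ _) (le_trans ?_ (rowsum_le M i))
  refine Finset.sum_le_sum fun j _ => ?_
  rw [abs_mul]
  have hj := hx j
  have : |x j - (n j : ℝ)| ≤ 1 := by rw [abs_le]; constructor <;> [linarith [hj.1]; linarith [hj.2]]
  calc |M i j| * |x j - (n j : ℝ)| ≤ |M i j| * 1 := by
        exact mul_le_mul_of_nonneg_left this (abs_nonneg _)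
    _ = |M i j| := mul_one _

lemma Asup_comp_le (n : Fin d → ℤ) :
    Asup (fun x => g (matVec M x)) n ≤ ∑ j ∈ Bbox (d := d) M, Asup g (Ffl M n + j) := by
  refine iSup₂_le fun x hx => ?_
  have h1 : (‖g (matVec M x)‖₊ : ℝ≥0∞) ≤ Asup g (fun i => ⌊matVec M x i⌋) :=
    nnnorm_le_Asup g (matVec M x)
  set m : Fin d → ℤ := fun i => ⌊matVec M x i⌋ with hm
  have hmem : ∀ i, m i ∈ Finset.Icc (Ffl M n i - K1 (d := d) M) (Ffl M n i + K1 M) := fun i =>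
    floor_mem_Icc _ _ (cube_dist_le M n hx i)
  have hj : m - Ffl M n ∈ Bbox (d := d) M := by
    rw [Bbox, Fintype.mem_piFinset]
    intro i
    have h2 := Finset.mem_Icc.mp (hmem i)
    simp only [Pi.sub_apply]
    exact Finset.mem_Icc.mpr ⟨by omega, by omega⟩
  have hsum : Asup g (Ffl M n + (m - Ffl M n)) ≤ ∑ j ∈ Bbox (d := d) M, Asup g (Ffl M n + j) :=
    Finset.single_le_sum (f := fun j => Asup g (Ffl M n + j)) (fun _ _ => zero_le) hj
  rw [show Ffl M n + (m - Ffl M n) = m by abel] at hsum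
  exact le_trans h1 hsum

-- fiber estimates
def S2 : ℝ := ∑ i, ∑ j, |(M⁻¹) i j|
def K2 : ℤ := ⌈S2 (d := d) M⌉ + 1
def tfl (m : Fin d → ℤ) : Fin d → ℤ := fun i => ⌊∑ j, (M⁻¹) i j * (m j : ℝ)⌋
def Phi (m : Fin d → ℤ) : Finset (Fin d → ℤ) :=
  Fintype.piFinset (fun i => Finset.Icc (tfl M m i - K2 (d := d) M) (tfl M m i + K2 M))

include hM in
lemma fiber_subset (m : Fin d → ℤ) :
    {n : Fin d → ℤ | Ffl M n = m} ⊆ ↑(Phi (d := d) M m) := by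
  intro n hn
  simp only [Set.mem_setOf_eq] at hn
  have hNM : matVec M⁻¹ (matVec M (zVec n)) = zVec n := by
    rw [matVec_matVec, Matrix.nonsing_inv_mul M hM, matVec_one]
  rw [Phi, Finset.mem_coe, Fintype.mem_piFinset]
  intro i
  have hni : (n i : ℝ) = ∑ j, (M⁻¹) i j * matVec M (zVec n) j := by
    conv_lhs => rw [show ((n i : ℝ)) = zVec n i from rfl, ← hNM]
    rfl
  have hdist : |(n i : ℝ) - ∑ j, (M⁻¹) i j * (m j : ℝ)| ≤ S2 (d := d) M := by
    rw [hni, ← Finset.sum_sub_distrib]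
    have heq : ∀ j ∈ Finset.univ, (M⁻¹) i j * matVec M (zVec n) j - (M⁻¹) i j * (m j : ℝ)
        = (M⁻¹) i j * (matVec M (zVec n) j - (m j : ℝ)) := fun j _ => by ring
    rw [Finset.sum_congr rfl heq]
    refine le_trans (Finset.abs_sum_le_sum_abs _ _) ?_
    refine le_trans ?_ (Finset.single_le_sum (f := fun i => ∑ j, |(M⁻¹) i j|)
      (fun i _ => Finset.sum_nonneg fun j _ => abs_nonneg _) (Finset.mem_univ i))
    refine Finset.sum_le_sum fun j _ => ?_
    rw [abs_mul]
    have hmj : |matVec M (zVec n) j - (m j : ℝ)| ≤ 1 := by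
      have hfl : ⌊matVec M (zVec n) j⌋ = m j := congrFun hn j
      have := Int.floor_le (matVec M (zVec n) j)
      have := Int.lt_floor_add_one (matVec M (zVec n) j)
      rw [hfl] at *
      rw [abs_le]; constructor <;> [linarith; linarith]
    calc |(M⁻¹) i j| * |matVec M (zVec n) j - (m j : ℝ)| ≤ |(M⁻¹) i j| * 1 :=
          mul_le_mul_of_nonneg_left hmj (abs_nonneg _)
      _ = |(M⁻¹) i j| := mul_one _
  have := floor_mem_Icc (S := S2 (d := d) M) ((n i : ℝ)) (∑ j, (M⁻¹) i j * (m j : ℝ)) hdist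
  rw [Int.floor_intCast] at this
  exact this

def CC : ℕ := (2 * (K2 (d := d) M) + 1).toNat ^ d

lemma Phi_card (m : Fin d → ℤ) : (Phi (d := d) M m).card = CC (d := d) M := by
  rw [Phi, Fintype.card_piFinset]
  rw [CC]
  have : ∀ i : Fin d, (Finset.Icc (tfl M m i - K2 (d := d) M) (tfl M m i + K2 M)).card
      = (2 * (K2 (d := d) M) + 1).toNat := by
    intro i
    rw [Int.card_Icc]
    congr 1
    ring
  rw [Finset.prod_congr rfl fun i _ => this i, Finset.prod_const, Finset.card_univ,
    Fintype.card_fin]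

include hM in
lemma tsum_comp_Ffl_le (u : (Fin d → ℤ) → ℝ≥0∞) :
    ∑' n, u (Ffl M n) ≤ (CC (d := d) M : ℝ≥0∞) * ∑' m, u m := by
  calc ∑' n, u (Ffl M n)
      = ∑' m, ∑' nb : (Ffl (d := d) M) ⁻¹' {m}, u (Ffl M nb.1) :=
        (ENNReal.tsum_fiberwise (fun n => u (Ffl M n)) (Ffl (d := d) M)).symm
    _ = ∑' m, ∑' _nb : (Ffl (d := d) M) ⁻¹' {m}, u m := by
        refine tsum_congr fun m => tsum_congr fun nb => ?_
        have hnb : Ffl M nb.1 = m := nb.2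
        rw [hnb]
    _ ≤ ∑' m, (CC (d := d) M : ℝ≥0∞) * u m := by
        refine ENNReal.tsum_le_tsum fun m => ?_
        have hinj : Function.Injective
            (fun nb : (Ffl (d := d) M) ⁻¹' {m} =>
              (⟨nb.1, fiber_subset M hM m nb.2⟩ : {n : Fin d → ℤ // n ∈ Phi (d := d) M m})) :=
          fun a b hab => Subtype.ext (congrArg Subtype.val hab :)
        calc ∑' _nb : (Ffl (d := d) M) ⁻¹' {m}, u m
            ≤ ∑' _nb : {n : Fin d → ℤ // n ∈ Phi (d := d) M m}, u m :=
              ENNReal.tsum_comp_le_tsum_of_injective hinj (fun _ => u m)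
          _ = (Phi (d := d) M m).card • u m := by
              rw [tsum_fintype, Finset.sum_const, Finset.card_univ, Fintype.card_coe]
          _ = (CC (d := d) M : ℝ≥0∞) * u m := by rw [Phi_card M, nsmul_eq_mul]
    _ = (CC (d := d) M : ℝ≥0∞) * ∑' m, u m := ENNReal.tsum_mul_left

include hM in
theorem amalgam_comp_lt_top (hgW : amalgamNorm g < ⊤) :
    amalgamNorm (fun x => g (matVec M x)) < ⊤ := by
  have hle : amalgamNorm (fun x => g (matVec M x))
      ≤ ((Bbox (d := d) M).card : ℝ≥0∞) * ((CC (d := d) M : ℝ≥0∞) * amalgamNorm g) := by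
    rw [amalgam_eq]
    calc ∑' n, Asup (fun x => g (matVec M x)) n
        ≤ ∑' n, ∑ j ∈ Bbox (d := d) M, Asup g (Ffl M n + j) :=
          ENNReal.tsum_le_tsum fun n => Asup_comp_le g M n
      _ = ∑ j ∈ Bbox (d := d) M, ∑' n, Asup g (Ffl M n + j) :=
          Summable.tsum_finsetSum fun j _ => ENNReal.summable
      _ ≤ ∑ j ∈ Bbox (d := d) M, (CC (d := d) M : ℝ≥0∞) * ∑' m, Asup g (m + j) :=
          Finset.sum_le_sum fun j _ => tsum_comp_Ffl_le M hM (fun m => Asup g (m + j))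
      _ = ∑ _j ∈ Bbox (d := d) M, (CC (d := d) M : ℝ≥0∞) * amalgamNorm g := by
          refine Finset.sum_congr rfl fun j _ => ?_
          congr 1
          rw [amalgam_eq]
          exact (Equiv.addRight j).tsum_eq (Asup g)
      _ = ((Bbox (d := d) M).card : ℝ≥0∞) * ((CC (d := d) M : ℝ≥0∞) * amalgamNorm g) := by
          rw [Finset.sum_const, nsmul_eq_mul]
  refine lt_of_le_of_lt hle ?_
  refine ENNReal.mul_lt_top (by simp) ?_
  exact ENNReal.mul_lt_top (by simp) hgW

end Cov
end Stmt2

/-- Let `g : ℝ^d → ℂ` be continuous with `‖g‖_{W(L^∞,ℓ¹)} < ∞` and let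
`M ∈ GL(d,ℝ)`.  Then `D_{M,g} : c ↦ ∑_{k ∈ ℤ^d} c_k · T_{Mk} g` is bounded from `ℓ^∞(ℤ^d)`
into `L^∞(ℝ^d)`, with the series converging pointwise absolutely; and for every `p ∈ [1,∞]`,
`D_{M,g} : ℓ^p(ℤ^d) → L^p(ℝ^d)` is well-defined and bounded with
`‖D_{M,g}‖_{ℓ^p → L^p} ≤ |det M|^{1/p} · ‖g ∘ M‖_{W(L^∞,ℓ¹)}`. -/
theorem stmt2 {d : ℕ} (g : Ed d → ℂ) (hgc : Continuous g) (hgW : amalgamNorm g < ⊤)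
    (M : Matrix (Fin d) (Fin d) ℝ) (hM : IsUnit M.det) :
    (∀ c : (Fin d → ℤ) → ℂ, (∃ B, ∀ k, ‖c k‖ ≤ B) →
      ∀ x : Ed d, Summable fun k => ‖c k * g (x - matVec M (zVec k))‖) ∧
    (∀ p : ℝ≥0∞, 1 ≤ p → ∀ c : (Fin d → ℤ) → ℂ,
      eLpNorm (fun x : Ed d => ∑' k, c k * g (x - matVec M (zVec k))) p volume
        ≤ ENNReal.ofReal |M.det| ^ (1 / p).toReal *
            amalgamNorm (fun x => g (matVec M x)) * lqNorm p c) := by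
  classical
  open Stmt2 in
  set h : Ed d → ℂ := fun z => g (matVec M z) with hh
  have hdet0 : M.det ≠ 0 := hM.ne_zero
  have hMMinv : ∀ v : Ed d, matVec M (matVec M⁻¹ v) = v := fun v => by
    rw [matVec_matVec, Matrix.mul_nonsing_inv M hM, matVec_one]
  have harg : ∀ (x : Ed d) (k : Fin d → ℤ),
      g (x - matVec M (zVec k)) = h (matVec M⁻¹ x - zVec k) := by
    intro x k
    show _ = g (matVec M (matVec M⁻¹ x - zVec k))
    rw [matVec_sub, hMMinv]
  have hAh : amalgamNorm h < ⊤ := amalgam_comp_lt_top g M hM hgW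
  have hAh' : amalgamNorm h ≠ ⊤ := hAh.ne
  have hhc : Continuous h := hgc.comp (continuous_matVec M)
  have hb_cont : ∀ k : Fin d → ℤ, Continuous (fun x : Ed d => h (matVec M⁻¹ x - zVec k)) :=
    fun k => hhc.comp ((continuous_matVec M⁻¹).sub continuous_const)
  have hSle : ∀ x : Ed d,
      ∑' k : Fin d → ℤ, (‖h (matVec M⁻¹ x - zVec k)‖₊ : ℝ≥0∞) ≤ amalgamNorm h :=
    fun x => tsum_translates_le h _
  -- pointwise bound for the series
  have hFp : ∀ (c : (Fin d → ℤ) → ℂ) (x : Ed d),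
      (‖∑' k, c k * g (x - matVec M (zVec k))‖₊ : ℝ≥0∞)
        ≤ ∑' k, (‖c k‖₊ : ℝ≥0∞) * (‖h (matVec M⁻¹ x - zVec k)‖₊ : ℝ≥0∞) := by
    intro c x
    have hterm : ∀ k : Fin d → ℤ, (‖c k * g (x - matVec M (zVec k))‖₊ : ℝ≥0∞)
        = (‖c k‖₊ : ℝ≥0∞) * (‖h (matVec M⁻¹ x - zVec k)‖₊ : ℝ≥0∞) := fun k => by
      rw [nnnorm_mul, ENNReal.coe_mul, harg x k]
    rw [← tsum_congr hterm]
    by_cases hs : Summable fun k => ‖c k * g (x - matVec M (zVec k))‖₊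
    · calc (‖∑' k, c k * g (x - matVec M (zVec k))‖₊ : ℝ≥0∞)
          ≤ ((∑' k, ‖c k * g (x - matVec M (zVec k))‖₊ : ℝ≥0) : ℝ≥0∞) :=
            ENNReal.coe_le_coe.mpr (nnnorm_tsum_le hs)
        _ = ∑' k, (‖c k * g (x - matVec M (zVec k))‖₊ : ℝ≥0∞) := ENNReal.coe_tsum hs
    · have : ∑' k, (‖c k * g (x - matVec M (zVec k))‖₊ : ℝ≥0∞) = ⊤ := by
        by_contra hne
        exact hs (ENNReal.tsum_coe_ne_top_iff_summable.mp hne)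
      rw [this]
      exact le_top
  constructor
  · -- part 1 : summability
    rintro c ⟨B, hB⟩ x
    have key : ∑' k, (‖c k * g (x - matVec M (zVec k))‖₊ : ℝ≥0∞) ≠ ⊤ := by
      have hle : ∑' k, (‖c k * g (x - matVec M (zVec k))‖₊ : ℝ≥0∞)
          ≤ ENNReal.ofReal B * amalgamNorm h := by
        calc ∑' k, (‖c k * g (x - matVec M (zVec k))‖₊ : ℝ≥0∞)
            ≤ ∑' k, ENNReal.ofReal B * (‖h (matVec M⁻¹ x - zVec k)‖₊ : ℝ≥0∞) := by
              refine ENNReal.tsum_le_tsum fun k => ?_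
              rw [nnnorm_mul, ENNReal.coe_mul, harg x k]
              refine mul_le_mul_left ?_ _
              rw [← ENNReal.ofReal_coe_nnreal, coe_nnnorm]
              exact ENNReal.ofReal_le_ofReal (hB k)
          _ = ENNReal.ofReal B * ∑' k, (‖h (matVec M⁻¹ x - zVec k)‖₊ : ℝ≥0∞) :=
              ENNReal.tsum_mul_left
          _ ≤ ENNReal.ofReal B * amalgamNorm h := mul_le_mul_right (hSle x) _
      exact (lt_of_le_of_lt hle (ENNReal.mul_lt_top ENNReal.ofReal_lt_top hAh)).ne
    have hs : Summable fun k => (‖c k * g (x - matVec M (zVec k))‖₊ : ℝ≥0) :=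
      ENNReal.tsum_coe_ne_top_iff_summable.mp key
    have := NNReal.summable_coe.mpr hs
    simpa [coe_nnnorm] using this
  · -- part 2 : the norm bound
    intro p hp c
    rcases eq_or_ne p ⊤ with hpt | hpt
    · subst hpt
      have h1 : ((1 : ℝ≥0∞) / ⊤).toReal = 0 := by simp
      rw [h1, ENNReal.rpow_zero, one_mul, lqNorm, if_pos rfl, eLpNorm_exponent_top]
      show essSup (fun x => (‖∑' k, c k * g (x - matVec M (zVec k))‖₊ : ℝ≥0∞)) volume
          ≤ amalgamNorm h * ⨆ k, (‖c k‖₊ : ℝ≥0∞)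
      refine essSup_le_of_ae_le _ (Filter.Eventually.of_forall fun x => ?_)
      calc (‖∑' k, c k * g (x - matVec M (zVec k))‖₊ : ℝ≥0∞)
          ≤ ∑' k, (‖c k‖₊ : ℝ≥0∞) * (‖h (matVec M⁻¹ x - zVec k)‖₊ : ℝ≥0∞) := hFp c x
        _ ≤ ∑' k, (⨆ j, (‖c j‖₊ : ℝ≥0∞)) * (‖h (matVec M⁻¹ x - zVec k)‖₊ : ℝ≥0∞) :=
            ENNReal.tsum_le_tsum fun k => mul_le_mul_left (le_iSup (fun j => ((‖c j‖₊ : ℝ≥0∞))) k) _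
        _ = (⨆ j, (‖c j‖₊ : ℝ≥0∞)) * ∑' k, (‖h (matVec M⁻¹ x - zVec k)‖₊ : ℝ≥0∞) :=
            ENNReal.tsum_mul_left
        _ ≤ (⨆ j, (‖c j‖₊ : ℝ≥0∞)) * amalgamNorm h := mul_le_mul_right (hSle x) _
        _ = amalgamNorm h * ⨆ j, (‖c j‖₊ : ℝ≥0∞) := mul_comm _ _
    · -- finite exponent
      have hp0 : p ≠ 0 := (lt_of_lt_of_le zero_lt_one hp).ne'
      have hpr1 : 1 ≤ p.toReal := by
        have := ENNReal.toReal_mono hpt hp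
        simpa using this
      set pr : ℝ := p.toReal with hprdef
      have hpr0 : 0 < pr := lt_of_lt_of_le zero_lt_one hpr1
      set a : (Fin d → ℤ) → ℝ≥0∞ := fun k => (‖c k‖₊ : ℝ≥0∞) with ha
      set b : (Fin d → ℤ) → Ed d → ℝ≥0∞ :=
        fun k x => (‖h (matVec M⁻¹ x - zVec k)‖₊ : ℝ≥0∞) with hb
      have hbmeas : ∀ k, Measurable (b k) := fun k =>
        (hb_cont k).measurable.nnnorm.coe_nnreal_ennreal
      have hdetinv : ((M⁻¹).det)⁻¹ = M.det := by
        rw [Matrix.det_nonsing_inv, Ring.inverse_eq_inv', inv_inv]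
      have hIb : ∀ k, ∫⁻ x, b k x ∂volume ≤ ENNReal.ofReal |M.det| * amalgamNorm h := by
        intro k
        have hphi : Measurable (fun y : Ed d => (‖h (y - zVec k)‖₊ : ℝ≥0∞)) :=
          (hhc.comp (continuous_id.sub continuous_const)).measurable.nnnorm.coe_nnreal_ennreal
        have hinvdet : (M⁻¹).det ≠ 0 := by
          intro h0
          rw [h0] at hdetinv
          simp at hdetinv
          exact hdet0 hdetinv.symm
        calc ∫⁻ x, b k x ∂volume
            = ENNReal.ofReal |((M⁻¹).det)⁻¹| * ∫⁻ y, (‖h (y - zVec k)‖₊ : ℝ≥0∞) :=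
              lintegral_matVec M⁻¹ hinvdet _ hphi
          _ = ENNReal.ofReal |M.det| * ∫⁻ y, (‖h (y - zVec k)‖₊ : ℝ≥0∞) := by rw [hdetinv]
          _ = ENNReal.ofReal |M.det| * ∫⁻ y, (‖h y‖₊ : ℝ≥0∞) := by
              rw [lintegral_sub_right_eq_self (fun y => (‖h y‖₊ : ℝ≥0∞)) (zVec k)]
          _ ≤ ENNReal.ofReal |M.det| * amalgamNorm h :=
              mul_le_mul_right (lintegral_nnnorm_le h hhc) _
      have key : ∫⁻ x, (‖∑' k, c k * g (x - matVec M (zVec k))‖₊ : ℝ≥0∞) ^ pr ∂volume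
          ≤ ENNReal.ofReal |M.det| * amalgamNorm h ^ pr * ∑' k, a k ^ pr := by
        rcases eq_or_lt_of_le hpr1 with hpr_eq | hpr_gt
        · -- pr = 1
          rw [← hpr_eq]
          simp only [ENNReal.rpow_one]
          calc ∫⁻ x, (‖∑' k, c k * g (x - matVec M (zVec k))‖₊ : ℝ≥0∞) ∂volume
              ≤ ∫⁻ x, ∑' k, a k * b k x ∂volume := lintegral_mono fun x => hFp c x
            _ = ∑' k, ∫⁻ x, a k * b k x ∂volume :=
                lintegral_tsum fun k => ((hbmeas k).const_mul _).aemeasurable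
            _ = ∑' k, a k * ∫⁻ x, b k x ∂volume :=
                tsum_congr fun k => lintegral_const_mul _ (hbmeas k)
            _ ≤ ∑' k, a k * (ENNReal.ofReal |M.det| * amalgamNorm h) :=
                ENNReal.tsum_le_tsum fun k => mul_le_mul_right (hIb k) _
            _ = ENNReal.ofReal |M.det| * amalgamNorm h * ∑' k, a k := by
                rw [ENNReal.tsum_mul_right]; ring
        · -- 1 < pr : use Hölder
          set qr : ℝ := pr / (pr - 1) with hqrdef
          have hpq : pr.HolderConjugate qr := by
            rw [hqrdef]; exact Real.HolderConjugate.conjExponent hpr_gt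
          have hqr0 : 0 < qr := hpq.symm.pos
          have hdivqr : pr / qr = pr - 1 := by
            rw [hqrdef]
            field_simp
          have hold : ∀ x : Ed d, (∑' k, a k * b k x)
              ≤ (∑' k, a k ^ pr * b k x) ^ (1 / pr) * (amalgamNorm h) ^ (1 / qr) := by
            intro x
            have hm1 : AEMeasurable (fun k : Fin d → ℤ => a k * (b k x) ^ (1 / pr))
                (Measure.count) := (measurable_of_countable _).aemeasurable
            have hm2 : AEMeasurable (fun k : Fin d → ℤ => (b k x) ^ (1 / qr))
                (Measure.count) := (measurable_of_countable _).aemeasurable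
            have hH := ENNReal.lintegral_mul_le_Lp_mul_Lq
              (Measure.count : Measure (Fin d → ℤ)) hpq hm1 hm2
            rw [lintegral_count, lintegral_count, lintegral_count] at hH
            have e1 : ∀ k, ((fun k => a k * (b k x) ^ (1 / pr)) *
                (fun k => (b k x) ^ (1 / qr))) k = a k * b k x := by
              intro k
              show a k * (b k x) ^ (1 / pr) * (b k x) ^ (1 / qr) = _
              rw [mul_assoc, ← ENNReal.rpow_add_of_nonneg _ _ (by positivity) (by positivity)]
              rw [show 1 / pr + 1 / qr = 1 by
                simpa [one_div] using hpq.inv_add_inv_eq_one, ENNReal.rpow_one]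
            have e2 : ∀ k, (a k * (b k x) ^ (1 / pr)) ^ pr = a k ^ pr * b k x := by
              intro k
              rw [ENNReal.mul_rpow_of_nonneg _ _ (le_of_lt hpr0), ← ENNReal.rpow_mul,
                one_div_mul_cancel hpr0.ne', ENNReal.rpow_one]
            have e3 : ∀ k, ((b k x) ^ (1 / qr)) ^ qr = b k x := by
              intro k
              rw [← ENNReal.rpow_mul, one_div_mul_cancel hqr0.ne', ENNReal.rpow_one]
            rw [tsum_congr e1, tsum_congr e2, tsum_congr e3] at hH
            refine le_trans hH (mul_le_mul_right ?_ _)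
            exact ENNReal.rpow_le_rpow (hSle x) (by positivity)
          have hpow : ∀ x : Ed d, (‖∑' k, c k * g (x - matVec M (zVec k))‖₊ : ℝ≥0∞) ^ pr
              ≤ (∑' k, a k ^ pr * b k x) * (amalgamNorm h) ^ (pr / qr) := by
            intro x
            calc (‖∑' k, c k * g (x - matVec M (zVec k))‖₊ : ℝ≥0∞) ^ pr
                ≤ (∑' k, a k * b k x) ^ pr :=
                  ENNReal.rpow_le_rpow (hFp c x) (le_of_lt hpr0)
              _ ≤ ((∑' k, a k ^ pr * b k x) ^ (1 / pr) * (amalgamNorm h) ^ (1 / qr)) ^ pr :=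
                  ENNReal.rpow_le_rpow (hold x) (le_of_lt hpr0)
              _ = (∑' k, a k ^ pr * b k x) * (amalgamNorm h) ^ (pr / qr) := by
                  rw [ENNReal.mul_rpow_of_nonneg _ _ (le_of_lt hpr0), ← ENNReal.rpow_mul,
                    ← ENNReal.rpow_mul, one_div_mul_cancel hpr0.ne', ENNReal.rpow_one]
                  congr 1
                  rw [one_div, inv_mul_eq_div]
          have hCne : (amalgamNorm h) ^ (pr / qr) ≠ ⊤ :=
            ENNReal.rpow_ne_top_of_nonneg (by positivity) hAh'
          calc ∫⁻ x, (‖∑' k, c k * g (x - matVec M (zVec k))‖₊ : ℝ≥0∞) ^ pr ∂volume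
              ≤ ∫⁻ x, (∑' k, a k ^ pr * b k x) * (amalgamNorm h) ^ (pr / qr) ∂volume :=
                lintegral_mono hpow
            _ = (∫⁻ x, ∑' k, a k ^ pr * b k x ∂volume) * amalgamNorm h ^ (pr / qr) :=
                lintegral_mul_const' _ _ hCne
            _ = (∑' k, a k ^ pr * ∫⁻ x, b k x ∂volume) * amalgamNorm h ^ (pr / qr) := by
                rw [lintegral_tsum (fun k => ((hbmeas k).const_mul _).aemeasurable)]
                congr 1
                exact tsum_congr fun k => lintegral_const_mul _ (hbmeas k)
            _ ≤ (∑' k, a k ^ pr * (ENNReal.ofReal |M.det| * amalgamNorm h))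
                  * amalgamNorm h ^ (pr / qr) :=
                mul_le_mul_left (ENNReal.tsum_le_tsum fun k => mul_le_mul_right (hIb k) _) _
            _ = ENNReal.ofReal |M.det| * (amalgamNorm h ^ (pr / qr) * amalgamNorm h)
                  * ∑' k, a k ^ pr := by
                rw [ENNReal.tsum_mul_right]; ring
            _ = ENNReal.ofReal |M.det| * amalgamNorm h ^ pr * ∑' k, a k ^ pr := by
                congr 2
                rw [show amalgamNorm h ^ (pr / qr) * amalgamNorm h
                    = amalgamNorm h ^ (pr / qr) * amalgamNorm h ^ (1 : ℝ) by
                  rw [ENNReal.rpow_one]]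
                rw [← ENNReal.rpow_add_of_nonneg _ _ (by positivity) zero_le_one, hdivqr]
                congr 1
                ring
      -- assemble
      rw [eLpNorm_eq_lintegral_rpow_enorm_toReal hp0 hpt]
      have hformula : lqNorm p c = (∑' k, a k ^ pr) ^ (1 / pr) := by
        rw [lqNorm, if_neg hpt]
      rw [hformula]
      have h1p : ((1 : ℝ≥0∞) / p).toReal = 1 / pr := by
        rw [one_div, one_div, ENNReal.toReal_inv]
      rw [h1p]
      calc (∫⁻ x, (‖∑' k, c k * g (x - matVec M (zVec k))‖₊ : ℝ≥0∞) ^ pr ∂volume) ^ (1 / pr)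
          ≤ (ENNReal.ofReal |M.det| * amalgamNorm h ^ pr * ∑' k, a k ^ pr) ^ (1 / pr) :=
            ENNReal.rpow_le_rpow key (by positivity)
        _ = ENNReal.ofReal |M.det| ^ (1 / pr) * amalgamNorm h * (∑' k, a k ^ pr) ^ (1 / pr) := by
            rw [ENNReal.mul_rpow_of_nonneg _ _ (by positivity),
              ENNReal.mul_rpow_of_nonneg _ _ (by positivity), ← ENNReal.rpow_mul,
              mul_one_div_cancel hpr0.ne', ENNReal.rpow_one]

end
end

section
/- Let m ∈ ℕ and let U ⊆ ℝ be open. There is a constant C_m with 1 ≤ C_m ≤ 3·√m·((0.8/e)·m²/ln(1+m))^m such that the following holds: if f ∈ C^m(U) never vanishes on U, and if A > 0, K ≥ 0, and x₀ ∈ U satisfy |f(x₀)| ≥ A^{-1} and |f^{(ℓ)}(x₀)| ≤ K for all 1 ≤ ℓ ≤ m, then the reciprocal F := 1/f satisfies |F^{(ℓ)}(x₀)| ≤ C_m·A·max{A·K, (A·K)^ℓ} for all 1 ≤ ℓ ≤ m. -/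
def fub : ℕ → ℕ
  | 0 => 1
  | n + 1 => ∑ k ∈ (Finset.range (n+1)).attach, (n+1).choose k * fub k
decreasing_by exact Finset.mem_range.mp k.2

lemma fub_zero : fub 0 = 1 := by rw [fub]

lemma fub_succ (n : ℕ) : fub (n+1) = ∑ k ∈ Finset.range (n+1), (n+1).choose k * fub k := by
  rw [fub, ← Finset.sum_attach (Finset.range (n+1)) (fun k => (n+1).choose k * fub k)]

lemma fub_one : fub 1 = 1 := by simp [fub_succ, fub_zero]
lemma fub_two : fub 2 = 3 := by simp [fub_succ, Finset.sum_range_succ, fub_zero, fub_one]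
lemma fub_three : fub 3 = 13 := by
  simp [fub_succ, Finset.sum_range_succ, fub_zero, fub_one, fub_two]
lemma fub_four : fub 4 = 75 := by
  simp [fub_succ, Finset.sum_range_succ, fub_zero, fub_one, fub_two, fub_three]; rfl

lemma fub_pos (n : ℕ) : 0 < fub n := by
  induction n using Nat.strong_induction_on with
  | _ n IH =>
    match n with
    | 0 => simp [fub_zero]
    | n + 1 =>
      rw [fub_succ]
      refine Finset.sum_pos (fun k hk => ?_) ⟨0, by simp⟩
      have hk' := Finset.mem_range.mp hk
      exact Nat.mul_pos (Nat.choose_pos (by omega)) (IH k hk')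

lemma fub_mono : Monotone fub := by
  refine monotone_nat_of_le_succ (fun n => ?_)
  rw [fub_succ]
  calc fub n ≤ (n+1).choose n * fub n := Nat.le_mul_of_pos_left _ (Nat.choose_pos (by omega))
    _ ≤ _ := Finset.single_le_sum (f := fun k => (n+1).choose k * fub k)
        (fun k _ => Nat.zero_le _) (Finset.self_mem_range_succ n)

lemma fub_succ_le (n : ℕ) : fub (n+1) ≤ 2 * (n+1) * fub n := by
  induction n using Nat.strong_induction_on with
  | _ n IH =>
    match n with
    | 0 => simp [fub_one, fub_zero]
    | n + 1 =>
      have e1 : fub (n+2) = (∑ k ∈ Finset.range (n+1), (n+1).choose k * fub (k+1))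
          + (∑ k ∈ Finset.range (n+1), (n+1).choose (k+1) * fub (k+1)) + 1 := by
        rw [fub_succ, Finset.sum_range_succ' (fun k => (n+2).choose k * fub k) (n+1)]
        simp only [Nat.choose_succ_succ (n+1), add_mul, Nat.choose_zero_right, fub_zero,
          mul_one, one_mul, Finset.sum_add_distrib]
      have e2 : (∑ k ∈ Finset.range (n+1), (n+1).choose (k+1) * fub (k+1)) + 1
          = 2 * fub (n+1) := by
        have h := Finset.sum_range_succ' (fun k => (n+1).choose k * fub k) (n+1)
        have h2 := Finset.sum_range_succ (fun k => (n+1).choose k * fub k) (n+1)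
        rw [← fub_succ] at h2
        simp only [Nat.choose_zero_right, fub_zero, mul_one, Nat.choose_self, one_mul] at h h2
        omega
      have hsum : (∑ k ∈ Finset.range (n+1), (n+1).choose k * fub (k+1))
          ≤ 2 * (n+1) * fub (n+1) := by
        calc (∑ k ∈ Finset.range (n+1), (n+1).choose k * fub (k+1))
            ≤ ∑ k ∈ Finset.range (n+1), (n+1).choose k * (2 * (n+1) * fub k) := by
              refine Finset.sum_le_sum (fun k hk => ?_)
              have hk' := Finset.mem_range.mp hk
              refine Nat.mul_le_mul_left _ (le_trans (IH k (by omega)) ?_)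
              exact Nat.mul_le_mul_right (fub k) (by omega : 2 * (k+1) ≤ 2 * (n+1))
          _ = 2 * (n+1) * ∑ k ∈ Finset.range (n+1), (n+1).choose k * fub k := by
              rw [Finset.mul_sum]; congr 1; ext k; ring
          _ = 2 * (n+1) * fub (n+1) := by rw [← fub_succ]
      have e3 : 2 * (n+1) * fub (n+1) + 2 * fub (n+1) = 2 * (n+2) * fub (n+1) := by ring
      show fub (n+2) ≤ 2 * (n+2) * fub (n+1)
      omega

open Finset in
lemma sum_leibniz_combin (F G : ℕ → ℂ) (n : ℕ) :
    (∑ j ∈ Finset.range (n+1), (n.choose j : ℂ) * F (j+1) * G (n-j))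
      + (∑ j ∈ Finset.range (n+1), (n.choose j : ℂ) * F j * G (n-j+1))
    = ∑ j ∈ Finset.range (n+2), ((n+1).choose j : ℂ) * F j * G (n+1-j) := by
  rw [Finset.sum_range_succ' (fun j => ((n+1).choose j : ℂ) * F j * G (n+1-j)) (n+1)]
  have e1 : ∀ j ∈ Finset.range (n+1),
      (((n+1).choose (j+1) : ℕ) : ℂ) * F (j+1) * G (n+1-(j+1))
      = (n.choose j : ℂ) * F (j+1) * G (n-j) + (n.choose (j+1) : ℂ) * F (j+1) * G (n-j) := by
    intro j hj
    have hj' := Finset.mem_range.mp hj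
    have h2 : n + 1 - (j+1) = n - j := by omega
    rw [h2, Nat.choose_succ_succ, Nat.cast_add]; ring
  rw [Finset.sum_congr rfl e1, Finset.sum_add_distrib]
  have e2 : ∑ j ∈ Finset.range (n+1), (n.choose j : ℂ) * F j * G (n-j+1)
      = (∑ j ∈ Finset.range n, (n.choose (j+1) : ℂ) * F (j+1) * G (n-j))
        + (n.choose 0 : ℂ) * F 0 * G (n+1) := by
    rw [Finset.sum_range_succ' (fun j => (n.choose j : ℂ) * F j * G (n-j+1)) n]
    congr 1
    refine Finset.sum_congr rfl (fun j hj => ?_)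
    have hj' := Finset.mem_range.mp hj
    have h2 : n - (j+1) + 1 = n - j := by omega
    rw [h2]
  have e3 : ∑ j ∈ Finset.range (n+1), (n.choose (j+1) : ℂ) * F (j+1) * G (n-j)
      = ∑ j ∈ Finset.range n, (n.choose (j+1) : ℂ) * F (j+1) * G (n-j) := by
    rw [Finset.sum_range_succ]
    simp [Nat.choose_succ_self]
  rw [e2, e3]
  simp only [Nat.choose_zero_right, Nat.cast_one, Nat.sub_zero]
  ring

open Finset in
lemma leibniz_iteratedDerivWithin {s : Set ℝ} (hs : UniqueDiffOn ℝ s) :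
    ∀ (n : ℕ) (f g : ℝ → ℂ), ContDiffOn ℝ n f s → ContDiffOn ℝ n g s → ∀ x ∈ s,
      iteratedDerivWithin n (fun y => f y * g y) s x =
        ∑ j ∈ Finset.range (n+1), (n.choose j : ℂ) *
          iteratedDerivWithin j f s x * iteratedDerivWithin (n-j) g s x := by
  intro n
  induction n with
  | zero => intro f g hf hg x hx; simp
  | succ n IH =>
    intro f g hf hg x hx
    have hf' : ContDiffOn ℝ n (derivWithin f s) s :=
      hf.derivWithin hs (by exact_mod_cast le_refl ((n:ℕ∞)+1))
    have hg' : ContDiffOn ℝ n (derivWithin g s) s :=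
      hg.derivWithin hs (by exact_mod_cast le_refl ((n:ℕ∞)+1))
    have hfn : ContDiffOn ℝ n f s := hf.of_le (by exact_mod_cast Nat.le_succ n)
    have hgn : ContDiffOn ℝ n g s := hg.of_le (by exact_mod_cast Nat.le_succ n)
    have step1 : iteratedDerivWithin (n+1) (fun y => f y * g y) s x
        = iteratedDerivWithin n (fun y => derivWithin f s y * g y
            + f y * derivWithin g s y) s x := by
      rw [iteratedDerivWithin_succ']
      refine iteratedDerivWithin_congr (fun y hy => ?_) hx
      have h1 : (1 : WithTop ℕ∞) ≤ ((n+1 : ℕ) : WithTop ℕ∞) := by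
        exact_mod_cast Nat.succ_le_succ (Nat.zero_le n)
      exact derivWithin_mul
        (hf.differentiableOn (by simp) y hy) (hg.differentiableOn (by simp) y hy)
    have step2 : iteratedDerivWithin n (fun y => derivWithin f s y * g y
            + f y * derivWithin g s y) s x
        = iteratedDerivWithin n (fun y => derivWithin f s y * g y) s x
          + iteratedDerivWithin n (fun y => f y * derivWithin g s y) s x := by
      have h1 : ContDiffOn ℝ n (fun y => derivWithin f s y * g y) s := hf'.mul hgn
      have h2 : ContDiffOn ℝ n (fun y => f y * derivWithin g s y) s := hfn.mul hg'
      exact iteratedDerivWithin_add hx hs (h1 x hx) (h2 x hx)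
    rw [step1, step2, IH _ _ hf' hgn x hx, IH _ _ hfn hg' x hx]
    have ef : ∀ j, iteratedDerivWithin j (derivWithin f s) s x
        = iteratedDerivWithin (j+1) f s x := fun j => (congrFun (iteratedDerivWithin_succ' (n := j)) x).symm
    have eg : ∀ j, iteratedDerivWithin j (derivWithin g s) s x
        = iteratedDerivWithin (j+1) g s x := fun j => (congrFun (iteratedDerivWithin_succ' (n := j)) x).symm
    simp only [ef, eg]
    exact sum_leibniz_combin (fun j => iteratedDerivWithin j f s x)
      (fun j => iteratedDerivWithin j g s x) n
section core
variable {U : Set ℝ}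

lemma core_bound (hU : IsOpen U) {m : ℕ} {f : ℝ → ℂ}
    (hf : ContDiffOn ℝ m f U) (hne : ∀ x ∈ U, f x ≠ 0) {A K : ℝ} {x₀ : ℝ}
    (hx₀ : x₀ ∈ U) (hA : 0 < A) (hK : 0 ≤ K) (hfA : A⁻¹ ≤ ‖f x₀‖)
    (hder : ∀ ℓ, 1 ≤ ℓ → ℓ ≤ m → ‖iteratedDerivWithin ℓ f U x₀‖ ≤ K) :
    ∀ ℓ, ℓ ≤ m → ‖iteratedDerivWithin ℓ (fun x => (f x)⁻¹) U x₀‖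
      ≤ (fub ℓ : ℝ) * A * (if ℓ = 0 then 1 else max (A*K) ((A*K)^ℓ)) := by
  have hs : UniqueDiffOn ℝ U := hU.uniqueDiffOn
  set F : ℝ → ℂ := fun x => (f x)⁻¹ with hFdef
  have hFc : ContDiffOn ℝ m F U := hf.inv hne
  have hfx₀ : f x₀ ≠ 0 := hne x₀ hx₀
  have hnf : (0:ℝ) < ‖f x₀‖ := lt_of_lt_of_le (inv_pos.mpr hA) hfA
  have hF0 : ‖F x₀‖ ≤ A := by
    rw [hFdef]
    simp only [norm_inv]
    exact (inv_le_comm₀ hnf hA).mpr hfA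
  set B := A * K with hBdef
  have hB : 0 ≤ B := mul_nonneg hA.le hK
  intro ℓ
  induction ℓ using Nat.strong_induction_on with
  | _ ℓ IH =>
    match ℓ with
    | 0 =>
      intro _
      simpa [fub_zero, iteratedDerivWithin_zero] using hF0
    | n + 1 =>
      intro hle
      have hle' : ((n+1:ℕ) : WithTop ℕ∞) ≤ (m : WithTop ℕ∞) := by exact_mod_cast hle
      have hfc' : ContDiffOn ℝ (n+1) f U := hf.of_le hle'
      have hFc' : ContDiffOn ℝ (n+1) F U := hFc.of_le hle'
      -- Leibniz applied to f * F = 1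
      have hzero : iteratedDerivWithin (n+1) (fun y => f y * F y) U x₀ = 0 := by
        have h1 : Set.EqOn (fun y => f y * F y) (fun _ => (1:ℂ)) U := by
          intro y hy
          exact mul_inv_cancel₀ (hne y hy)
        rw [iteratedDerivWithin_congr h1 hx₀,
          iteratedDerivWithin_eq_iteratedFDerivWithin,
          iteratedFDerivWithin_const_of_ne (Nat.succ_ne_zero n) (1:ℂ) U]
        simp
      have hleib := leibniz_iteratedDerivWithin hs (n+1) f F hfc' hFc' x₀ hx₀
      rw [hzero] at hleib
      -- peel off the j = 0 term
      rw [Finset.sum_range_succ' (fun j => (((n+1).choose j : ℕ) : ℂ) *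
        iteratedDerivWithin j f U x₀ * iteratedDerivWithin (n+1-j) F U x₀) (n+1)] at hleib
      simp only [Nat.choose_zero_right, Nat.cast_one, one_mul, iteratedDerivWithin_zero,
        Nat.sub_zero] at hleib
      have hiso : f x₀ * iteratedDerivWithin (n+1) F U x₀
          = - ∑ j ∈ Finset.range (n+1), (((n+1).choose (j+1) : ℕ) : ℂ) *
              iteratedDerivWithin (j+1) f U x₀ * iteratedDerivWithin (n+1-(j+1)) F U x₀ := by
        linear_combination -hleib
      -- norm bound
      have hnorm : ‖f x₀ * iteratedDerivWithin (n+1) F U x₀‖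
          ≤ ∑ j ∈ Finset.range (n+1), ((n+1).choose (j+1) : ℝ) * K *
              ((fub (n-j) : ℝ) * A * (if n-j = 0 then 1 else max B (B^(n-j)))) := by
        rw [hiso, norm_neg]
        refine le_trans (norm_sum_le _ _) (Finset.sum_le_sum (fun j hj => ?_))
        have hj' := Finset.mem_range.mp hj
        have hsub : n + 1 - (j+1) = n - j := by omega
        rw [hsub]
        rw [norm_mul, norm_mul]
        have hchoose : ‖(((n+1).choose (j+1) : ℕ) : ℂ)‖ = ((n+1).choose (j+1) : ℝ) := by
          simp
        rw [hchoose]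
        refine mul_le_mul ?_ (IH (n-j) (by omega) (by omega)) (norm_nonneg _) ?_
        · refine mul_le_mul_of_nonneg_left ?_ (by positivity)
          exact hder (j+1) (by omega) (by omega)
        · positivity
      -- from |f x₀| ≥ A⁻¹
      have hmain : ‖iteratedDerivWithin (n+1) F U x₀‖
          ≤ A * ‖f x₀ * iteratedDerivWithin (n+1) F U x₀‖ := by
        rw [norm_mul]
        calc ‖iteratedDerivWithin (n+1) F U x₀‖
            = A * (A⁻¹ * ‖iteratedDerivWithin (n+1) F U x₀‖) := by
              field_simp
          _ ≤ A * (‖f x₀‖ * ‖iteratedDerivWithin (n+1) F U x₀‖) := by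
              refine mul_le_mul_of_nonneg_left ?_ hA.le
              exact mul_le_mul_of_nonneg_right hfA (norm_nonneg _)
      -- combine, bounding B * M(n-j) ≤ M(n+1)
      have hBM : ∀ k : ℕ, k ≤ n → B * (if k = 0 then 1 else max B (B^k)) ≤ max B (B^(n+1)) := by
        intro k hk
        by_cases hk0 : k = 0
        · simp [hk0, le_max_left]
        · simp only [hk0, if_false]
          rcases le_or_gt B 1 with hB1 | hB1
          · have h1 : B ^ k ≤ B := by
              calc B ^ k ≤ B ^ 1 := pow_le_pow_of_le_one hB hB1 (by omega)
                _ = B := pow_one B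
            rw [max_eq_left h1]
            calc B * B ≤ 1 * B := by nlinarith
              _ = B := one_mul B
              _ ≤ max B (B^(n+1)) := le_max_left _ _
          · have h1 : B ≤ B ^ k := by
              calc B = B ^ 1 := (pow_one B).symm
                _ ≤ B ^ k := pow_le_pow_right₀ hB1.le (by omega)
            rw [max_eq_right h1]
            calc B * B ^ k = B ^ (k+1) := by ring
              _ ≤ B ^ (n+1) := pow_le_pow_right₀ hB1.le (by omega)
              _ ≤ max B (B^(n+1)) := le_max_right _ _
      have hsum2 : ∑ j ∈ Finset.range (n+1), ((n+1).choose (j+1) : ℝ) * K *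
              ((fub (n-j) : ℝ) * A * (if n-j = 0 then 1 else max B (B^(n-j))))
          ≤ ∑ j ∈ Finset.range (n+1), ((n+1).choose (j+1) : ℝ) * (fub (n-j) : ℝ) *
              (max B (B^(n+1))) := by
        refine Finset.sum_le_sum (fun j hj => ?_)
        have hj' := Finset.mem_range.mp hj
        have hbm := hBM (n-j) (by omega)
        have hA' : K * (A * (if n-j = 0 then 1 else max B (B^(n-j))))
            ≤ max B (B^(n+1)) := by
          have heq : K * (A * (if n-j = 0 then 1 else max B (B^(n-j))))
              = B * (if n-j = 0 then 1 else max B (B^(n-j))) := by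
            rw [hBdef]; ring
          rw [heq]
          exact hbm
        calc ((n+1).choose (j+1) : ℝ) * K * ((fub (n-j) : ℝ) * A *
                (if n-j = 0 then 1 else max B (B^(n-j))))
            = ((n+1).choose (j+1) : ℝ) * (fub (n-j) : ℝ) *
                (K * (A * (if n-j = 0 then 1 else max B (B^(n-j))))) := by ring
          _ ≤ _ := by
              refine mul_le_mul_of_nonneg_left hA' (by positivity)
      -- the combinatorial identity
      have hcomb : ∑ j ∈ Finset.range (n+1), ((n+1).choose (j+1) : ℝ) * (fub (n-j) : ℝ)
          = (fub (n+1) : ℝ) := by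
        have hnat : ∑ j ∈ Finset.range (n+1), (n+1).choose (j+1) * fub (n-j) = fub (n+1) := by
          have e1 : ∀ j ∈ Finset.range (n+1),
              (n+1).choose (j+1) * fub (n-j) = (n+1).choose (n-j) * fub (n-j) := by
            intro j hj
            have hj' := Finset.mem_range.mp hj
            have : (n+1) - (j+1) = n - j := by omega
            rw [← this, Nat.choose_symm (by omega)]
          rw [Finset.sum_congr rfl e1]
          have e2 := Finset.sum_range_reflect (fun k => (n+1).choose k * fub k) (n+1)
          simp only [Nat.add_sub_cancel] at e2
          rw [e2, ← fub_succ]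
        exact_mod_cast hnat
      -- put everything together
      rw [if_neg (Nat.succ_ne_zero n)]
      calc ‖iteratedDerivWithin (n+1) F U x₀‖
          ≤ A * ‖f x₀ * iteratedDerivWithin (n+1) F U x₀‖ := hmain
        _ ≤ A * ∑ j ∈ Finset.range (n+1), ((n+1).choose (j+1) : ℝ) * (fub (n-j) : ℝ) *
              (max B (B^(n+1))) := mul_le_mul_of_nonneg_left (le_trans hnorm hsum2) hA.le
        _ = (fub (n+1) : ℝ) * A * max B (B^(n+1)) := by
            rw [← Finset.sum_mul, hcomb]; ring
end core
lemma fact_le_fub_aux (n : ℕ) : fub (n+1) ≤ (n+1).factorial * 2^n := by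
  induction n with
  | zero => simp [fub_one]
  | succ n IH =>
    calc fub (n+2) ≤ 2 * (n+2) * fub (n+1) := fub_succ_le (n+1)
      _ ≤ 2 * (n+2) * ((n+1).factorial * 2^n) := Nat.mul_le_mul_left _ IH
      _ = (n+2).factorial * 2^(n+1) := by
          rw [show n+2 = (n+1)+1 from rfl, Nat.factorial_succ ((n+1))]; ring

lemma stirling_bound (n : ℕ) :
    ((n+1).factorial : ℝ) ≤ Real.exp 1 * Real.sqrt (n+1) * (((n+1:ℕ):ℝ) / Real.exp 1)^(n+1) := by
  have h1 : Real.log (Stirling.stirlingSeq (n+1)) ≤ Real.log (Stirling.stirlingSeq 1) := by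
    have := Stirling.log_stirlingSeq'_antitone (Nat.zero_le n)
    simpa using this
  have p1 := Stirling.stirlingSeq'_pos n
  have p2 := Stirling.stirlingSeq'_pos 0
  have h2 : Stirling.stirlingSeq (n+1) ≤ Stirling.stirlingSeq 1 :=
    (Real.log_le_log_iff p1 p2).mp h1
  rw [Stirling.stirlingSeq_one] at h2
  have hden : (0:ℝ) < Real.sqrt (2*(n+1)) * (((n+1:ℕ):ℝ) / Real.exp 1)^(n+1) := by
    have : (0:ℝ) < ((n+1:ℕ):ℝ) / Real.exp 1 := by positivity
    positivity
  have hfac : ((n+1).factorial : ℝ)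
      = Stirling.stirlingSeq (n+1) * (Real.sqrt (2*(n+1)) * (((n+1:ℕ):ℝ) / Real.exp 1)^(n+1)) := by
    rw [Stirling.stirlingSeq]
    field_simp
    norm_num
  rw [hfac]
  have hs2 : Real.sqrt (2*(n+1)) = Real.sqrt 2 * Real.sqrt (n+1) := by
    rw [Real.sqrt_mul (by norm_num)]
  calc Stirling.stirlingSeq (n+1) * (Real.sqrt (2*(n+1)) * (((n+1:ℕ):ℝ) / Real.exp 1)^(n+1))
      ≤ (Real.exp 1 / Real.sqrt 2) * (Real.sqrt (2*(n+1)) * (((n+1:ℕ):ℝ) / Real.exp 1)^(n+1)) :=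
        mul_le_mul_of_nonneg_right h2 hden.le
    _ = Real.exp 1 * Real.sqrt (n+1) * (((n+1:ℕ):ℝ) / Real.exp 1)^(n+1) := by
        rw [hs2]
        have hsqrt2 : Real.sqrt 2 ≠ 0 := by positivity
        field_simp

lemma log_le_two_fifth (m : ℕ) (hm : 5 ≤ m) : Real.log (1+(m:ℝ)) ≤ 0.4 * m := by
  have hm' : (5:ℝ) ≤ m := by exact_mod_cast hm
  rw [Real.log_le_iff_le_exp (by positivity)]
  have h1 : Real.exp (0.4 * m) = Real.exp 2 * Real.exp (0.4*m - 2) := by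
    rw [← Real.exp_add]; ring_nf
  have h2 : (7.38905:ℝ) ≤ Real.exp 2 := by
    have := Real.exp_one_gt_d9
    calc (7.38905:ℝ) ≤ 2.7182818283^2 := by norm_num
      _ ≤ (Real.exp 1)^2 := by nlinarith
      _ = Real.exp 2 := by rw [← Real.exp_nat_mul]; norm_num
  have h3 : (0.4*(m:ℝ) - 2) + 1 ≤ Real.exp (0.4*m - 2) := Real.add_one_le_exp _
  have h4 : (0:ℝ) < Real.exp (0.4*m-2) := Real.exp_pos _
  rw [h1]
  nlinarith
lemma log_three_le : Real.log 3 ≤ (3 * Real.log 2 + 1/8) / 2 := by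
  have h9 : Real.log 9 = 2 * Real.log 3 := by
    rw [show (9:ℝ) = 3^2 by norm_num, Real.log_pow]; push_cast; ring
  have h98 : Real.log 9 = Real.log 8 + Real.log (9/8) := by
    rw [← Real.log_mul (by norm_num) (by norm_num)]; norm_num
  have h8 : Real.log 8 = 3 * Real.log 2 := by
    rw [show (8:ℝ) = 2^3 by norm_num, Real.log_pow]; push_cast; ring
  have hd : Real.log (9/8) ≤ 9/8 - 1 := Real.log_le_sub_one_of_pos (by norm_num)
  linarith

lemma log_four_eq : Real.log 4 = 2 * Real.log 2 := by
  rw [show (4:ℝ) = 2^2 by norm_num, Real.log_pow]; push_cast; ring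

lemma log_five_le : Real.log 5 ≤ 2 * Real.log 2 + 1/4 := by
  have h54 : Real.log 5 = Real.log 4 + Real.log (5/4) := by
    rw [← Real.log_mul (by norm_num) (by norm_num)]; norm_num
  have hd : Real.log (5/4) ≤ 5/4 - 1 := Real.log_le_sub_one_of_pos (by norm_num)
  rw [h54, log_four_eq]; linarith

lemma helper_small (c s₀ b₀ sq bs : ℝ) (m : ℕ) (hc : c ≤ 3*s₀*b₀^m) (hs : s₀ ≤ sq)
    (hb : b₀ ≤ bs) (hb₀ : 0 ≤ b₀) (hs₀ : 0 ≤ s₀) : c ≤ 3*sq*bs^m := by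
  calc c ≤ 3*s₀*b₀^m := hc
    _ ≤ 3*sq*bs^m := by
      have h1 : b₀^m ≤ bs^m := pow_le_pow_left₀ hb₀ hb m
      have h2 : (0:ℝ) ≤ b₀^m := pow_nonneg hb₀ m
      nlinarith

lemma fub_le_bound (m : ℕ) (hm : 1 ≤ m) :
    (fub m : ℝ) ≤ 3 * Real.sqrt m * ((0.8 / Real.exp 1) * (m:ℝ)^2 / Real.log (1+m)) ^ m := by
  have he := Real.exp_one_lt_d9
  have he' := Real.exp_one_gt_d9
  have hl2 := Real.log_two_lt_d9
  have hl2' := Real.log_two_gt_d9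
  have hepos := Real.exp_pos 1
  match m, hm with
  | 1, _ =>
    have hLpos : (0:ℝ) < Real.log 2 := Real.log_pos (by norm_num)
    rw [show (((1:ℕ)):ℝ) = 1 by norm_num, show (1:ℝ)+1 = 2 by norm_num]
    refine helper_small _ 1 (1/3) _ _ 1 (by rw [fub_one]; norm_num) ?_ ?_ (by norm_num) (by norm_num)
    · rw [Real.sqrt_one]
    · rw [le_div_iff₀ hLpos, show (0.8/Real.exp 1)*(1:ℝ)^2 = 0.8/Real.exp 1 by ring,
        le_div_iff₀ hepos]
      nlinarith
  | 2, _ =>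
    have hLpos : (0:ℝ) < Real.log 3 := Real.log_pos (by norm_num)
    have hl3 := log_three_le
    rw [show (((2:ℕ)):ℝ) = 2 by norm_num, show (1:ℝ)+2 = 3 by norm_num]
    refine helper_small _ 1 1 _ _ 2 (by rw [fub_two]; norm_num) ?_ ?_ (by norm_num) (by norm_num)
    · rw [show (1:ℝ) = Real.sqrt 1 by rw [Real.sqrt_one]]
      exact Real.sqrt_le_sqrt (by norm_num)
    · rw [le_div_iff₀ hLpos, show (0.8/Real.exp 1)*(2:ℝ)^2 = 3.2/Real.exp 1 by ring,
        le_div_iff₀ hepos]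
      nlinarith
  | 3, _ =>
    have hLpos : (0:ℝ) < Real.log 4 := Real.log_pos (by norm_num)
    have hl4 := log_four_eq
    rw [show (((3:ℕ)):ℝ) = 3 by norm_num, show (1:ℝ)+3 = 4 by norm_num]
    refine helper_small _ 1.7 1.9 _ _ 3 (by rw [fub_three]; norm_num) ?_ ?_ (by norm_num) (by norm_num)
    · rw [show (1.7:ℝ) = Real.sqrt (1.7^2) by rw [Real.sqrt_sq (by norm_num)]]
      exact Real.sqrt_le_sqrt (by norm_num)
    · rw [le_div_iff₀ hLpos, show (0.8/Real.exp 1)*(3:ℝ)^2 = 7.2/Real.exp 1 by ring,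
        le_div_iff₀ hepos]
      nlinarith
  | 4, _ =>
    have hLpos : (0:ℝ) < Real.log 5 := Real.log_pos (by norm_num)
    have hl5 := log_five_le
    rw [show (((4:ℕ)):ℝ) = 4 by norm_num, show (1:ℝ)+4 = 5 by norm_num]
    refine helper_small _ 1.9 2.2 _ _ 4 (by rw [fub_four]; norm_num) ?_ ?_ (by norm_num) (by norm_num)
    · rw [show (1.9:ℝ) = Real.sqrt (1.9^2) by rw [Real.sqrt_sq (by norm_num)]]
      exact Real.sqrt_le_sqrt (by norm_num)
    · rw [le_div_iff₀ hLpos, show (0.8/Real.exp 1)*(4:ℝ)^2 = 12.8/Real.exp 1 by ring,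
        le_div_iff₀ hepos]
      nlinarith
  | (k+5), _ =>
    set M : ℕ := k + 5 with hM
    have hM5 : (5:ℝ) ≤ (M:ℝ) := by
      have : (5:ℕ) ≤ M := by omega
      exact_mod_cast this
    have hMpos : (0:ℝ) < (M:ℝ) := by linarith
    have hLpos : (0:ℝ) < Real.log (1+(M:ℝ)) := Real.log_pos (by linarith)
    have hLle : Real.log (1+(M:ℝ)) ≤ 0.4 * M := log_le_two_fifth M (by omega)
    have h1 : (fub M : ℝ) ≤ (M.factorial : ℝ) * 2^(k+4) := by
      have h := fact_le_fub_aux (k+4)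
      rw [show k+4+1 = M by omega] at h
      have hcast : (fub M : ℝ) ≤ ((M.factorial * 2^(k+4) : ℕ) : ℝ) := by exact_mod_cast h
      calc (fub M : ℝ) ≤ ((M.factorial * 2^(k+4) : ℕ) : ℝ) := hcast
        _ = (M.factorial : ℝ) * 2^(k+4) := by push_cast; ring
    have h2 : (M.factorial : ℝ) ≤ Real.exp 1 * Real.sqrt M * ((M:ℝ)/Real.exp 1)^M := by
      have h := stirling_bound (k+4)
      rw [show k+4+1 = M by omega] at h
      rw [show ((k+4:ℕ):ℝ)+1 = (M:ℝ) by push_cast [hM]; ring] at h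
      exact h
    have h3 : (fub M : ℝ) ≤ (Real.exp 1 / 2) * Real.sqrt M * (2*(M:ℝ)/Real.exp 1)^M := by
      have key : Real.exp 1 * Real.sqrt M * ((M:ℝ)/Real.exp 1)^M * 2^(k+4)
          = (Real.exp 1/2) * Real.sqrt M * (2*(M:ℝ)/Real.exp 1)^M := by
        have e1 : (2*(M:ℝ)/Real.exp 1)^M = 2^M * ((M:ℝ)/Real.exp 1)^M := by
          rw [← mul_pow]; congr 1; field_simp
        have e2 : (2:ℝ)^M = 2^(k+4) * 2 := by
          rw [show M = (k+4)+1 by omega, pow_succ]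
        rw [e1, e2]; ring
      calc (fub M : ℝ) ≤ (M.factorial : ℝ) * 2^(k+4) := h1
        _ ≤ Real.exp 1 * Real.sqrt M * ((M:ℝ)/Real.exp 1)^M * 2^(k+4) := by
            have hp : (0:ℝ) ≤ 2^(k+4) := by positivity
            exact mul_le_mul_of_nonneg_right h2 hp
        _ = _ := by rw [key]
    have hbase : 2*(M:ℝ)/Real.exp 1 ≤ (0.8/Real.exp 1) * (M:ℝ)^2 / Real.log (1+(M:ℝ)) := by
      rw [div_le_div_iff₀ hepos hLpos]
      calc 2*(M:ℝ) * Real.log (1+(M:ℝ)) ≤ 2*(M:ℝ) * (0.4*M) := by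
            refine mul_le_mul_of_nonneg_left hLle (by linarith)
        _ = (0.8 * (M:ℝ)^2) := by ring
        _ = (0.8/Real.exp 1) * (M:ℝ)^2 * Real.exp 1 := by
            field_simp
    have hbnn : (0:ℝ) ≤ 2*(M:ℝ)/Real.exp 1 := by positivity
    calc (fub M : ℝ) ≤ (Real.exp 1 / 2) * Real.sqrt M * (2*(M:ℝ)/Real.exp 1)^M := h3
      _ ≤ 3 * Real.sqrt M * ((0.8/Real.exp 1) * (M:ℝ)^2 / Real.log (1+(M:ℝ)))^M := by
          have hp : (2*(M:ℝ)/Real.exp 1)^M ≤ ((0.8/Real.exp 1) * (M:ℝ)^2 / Real.log (1+(M:ℝ)))^M :=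
            pow_le_pow_left₀ hbnn hbase M
          have hsq : (0:ℝ) ≤ Real.sqrt M := Real.sqrt_nonneg _
          have he2 : Real.exp 1 / 2 ≤ 3 := by nlinarith
          have hpnn : (0:ℝ) ≤ (2*(M:ℝ)/Real.exp 1)^M := by positivity
          exact mul_le_mul (mul_le_mul_of_nonneg_right he2 hsq) hp hpnn (by positivity)
lemma iteratedDeriv_eq_within {U : Set ℝ} (hU : IsOpen U) (n : ℕ) (f : ℝ → ℂ) {x : ℝ}
    (hx : x ∈ U) : iteratedDerivWithin n f U x = iteratedDeriv n f x := by
  rw [iteratedDerivWithin_eq_iteratedFDerivWithin, iteratedDeriv_eq_iteratedFDeriv,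
    iteratedFDerivWithin_of_isOpen n hU hx]

/-- For `m ∈ ℕ` and `U ⊆ ℝ` open, there is a constant `C_m` with
`1 ≤ C_m ≤ 3·√m·((0.8/e)·m²/ln(1+m))^m` such that: if `f ∈ C^m(U)` never vanishes on `U`, and
if `A > 0`, `K ≥ 0` and `x₀ ∈ U` satisfy `|f(x₀)| ≥ A⁻¹` and `|f^{(ℓ)}(x₀)| ≤ K` for
`1 ≤ ℓ ≤ m`, then `F = 1/f` satisfies `|F^{(ℓ)}(x₀)| ≤ C_m · A · max {A·K, (A·K)^ℓ}` for all
`1 ≤ ℓ ≤ m`. -/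
theorem stmt16 (m : ℕ) (hm : 1 ≤ m) (U : Set ℝ) (hU : IsOpen U) :
    ∃ Cm : ℝ, 1 ≤ Cm ∧
      Cm ≤ 3 * Real.sqrt m * ((0.8 / Real.exp 1) * (m : ℝ) ^ 2 / Real.log (1 + m)) ^ m ∧
      ∀ f : ℝ → ℂ, ContDiffOn ℝ m f U → (∀ x ∈ U, f x ≠ 0) →
        ∀ (A K : ℝ) (x₀ : ℝ), x₀ ∈ U → 0 < A → 0 ≤ K →
          A⁻¹ ≤ ‖f x₀‖ → (∀ ℓ, 1 ≤ ℓ → ℓ ≤ m → ‖iteratedDeriv ℓ f x₀‖ ≤ K) →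
          ∀ ℓ, 1 ≤ ℓ → ℓ ≤ m →
            ‖iteratedDeriv ℓ (fun x => (f x)⁻¹) x₀‖ ≤ Cm * A * max (A * K) ((A * K) ^ ℓ) := by
  refine ⟨(fub m : ℝ), ?_, fub_le_bound m hm, ?_⟩
  · exact_mod_cast fub_pos m
  · intro f hf hne A K x₀ hx₀ hA hK hfA hder ℓ hℓ1 hℓm
    have hder' : ∀ j, 1 ≤ j → j ≤ m → ‖iteratedDerivWithin j f U x₀‖ ≤ K := by
      intro j h1 h2
      rw [iteratedDeriv_eq_within hU j f hx₀]
      exact hder j h1 h2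
    have h := core_bound hU hf hne hx₀ hA hK hfA hder' ℓ hℓm
    rw [if_neg (by omega : ¬ ℓ = 0), iteratedDeriv_eq_within hU ℓ _ hx₀] at h
    refine le_trans h ?_
    have hc : (fub ℓ : ℝ) ≤ (fub m : ℝ) := by exact_mod_cast fub_mono hℓm
    have hmax : (0:ℝ) ≤ max (A * K) ((A * K) ^ ℓ) :=
      le_trans (mul_nonneg hA.le hK) (le_max_left _ _)
    have := mul_le_mul_of_nonneg_right (mul_le_mul_of_nonneg_right hc hA.le) hmax
    exact this
end

section
/- For every d ∈ ℕ, every η ∈ ℝ^d, and every A ∈ GL(d,ℝ): ∑_{k∈ℤ^d} (1 + |η + A k|)^{-(d+1)} ≤ (d+1)·2^{1+2d}·max{1, ‖A^{-1}‖^{d+1}}. -/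
open MeasureTheory Matrix
open scoped ENNReal

noncomputable section

/-- The operator norm of a matrix, with respect to the Euclidean norm. -/
def matOpNorm {d : ℕ} (A : Matrix (Fin d) (Fin d) ℝ) : ℝ :=
  ⨆ x : Metric.closedBall (0 : Ed d) 1, ‖matVec A (x : Ed d)‖

/- ### Auxiliary lemmas -/

open Filter
open scoped Topology

lemma aux_matVec_eq_lin {d : ℕ} (B : Matrix (Fin d) (Fin d) ℝ) (x : Ed d) :
    matVec B x = Matrix.toEuclideanLin B x := rfl

lemma aux_coord_le_norm {d : ℕ} (x : Ed d) (i : Fin d) : |x i| ≤ ‖x‖ := by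
  rw [EuclideanSpace.norm_eq]
  have h : |x i| = Real.sqrt (‖x i‖^2) := by
    rw [Real.sqrt_sq_eq_abs, Real.norm_eq_abs, abs_abs]
  rw [h]
  apply Real.sqrt_le_sqrt
  exact Finset.single_le_sum (f := fun j => ‖x j‖^2) (fun j _ => sq_nonneg _) (Finset.mem_univ i)

lemma aux_matVec_norm_le {d : ℕ} (B : Matrix (Fin d) (Fin d) ℝ) (x : Ed d) :
    ‖matVec B x‖ ≤ matOpNorm B * ‖x‖ := by
  set T : Ed d →L[ℝ] Ed d := LinearMap.toContinuousLinearMap (Matrix.toEuclideanLin B) with hTdef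
  have hT : ∀ y, matVec B y = T y := fun y => rfl
  have bdd : BddAbove (Set.range fun u : Metric.closedBall (0 : Ed d) 1 => ‖matVec B (u : Ed d)‖) := by
    refine ⟨‖T‖, ?_⟩
    rintro _ ⟨⟨u, hu⟩, rfl⟩
    simp only [hT]
    calc ‖T u‖ ≤ ‖T‖ * ‖u‖ := T.le_opNorm u
    _ ≤ ‖T‖ * 1 := by
        refine mul_le_mul_of_nonneg_left ?_ (norm_nonneg _)
        simpa [Metric.mem_closedBall] using hu
    _ = ‖T‖ := mul_one _
  have le_op : ∀ u : Ed d, ‖u‖ ≤ 1 → ‖matVec B u‖ ≤ matOpNorm B := by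
    intro u hu
    exact le_ciSup bdd (⟨u, by simpa [Metric.mem_closedBall] using hu⟩ : Metric.closedBall (0 : Ed d) 1)
  rcases eq_or_ne x 0 with rfl | hx
  · have h0 : matVec B (0 : Ed d) = 0 := by rw [aux_matVec_eq_lin, map_zero]
    simp [h0]
  · have hxn : (0:ℝ) < ‖x‖ := norm_pos_iff.mpr hx
    set u : Ed d := ‖x‖⁻¹ • x with hu
    have hun : ‖u‖ = 1 := by
      rw [hu, norm_smul, norm_inv, norm_norm, inv_mul_cancel₀ hxn.ne']
    have hxu : x = ‖x‖ • u := by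
      rw [hu, smul_smul, mul_inv_cancel₀ hxn.ne', one_smul]
    calc ‖matVec B x‖ = ‖T x‖ := by rw [hT]
    _ = ‖x‖ * ‖T u‖ := by
        have hTx : T x = ‖x‖ • T u := by rw [← T.map_smul, ← hxu]
        rw [hTx, norm_smul, Real.norm_eq_abs, abs_of_pos hxn]
    _ ≤ ‖x‖ * matOpNorm B := by
        refine mul_le_mul_of_nonneg_left ?_ hxn.le
        rw [← hT]; exact le_op u hun.le
    _ = matOpNorm B * ‖x‖ := mul_comm _ _

lemma aux_matOpNorm_nonneg {d : ℕ} (B : Matrix (Fin d) (Fin d) ℝ) : 0 ≤ matOpNorm B := by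
  set T : Ed d →L[ℝ] Ed d := LinearMap.toContinuousLinearMap (Matrix.toEuclideanLin B) with hTdef
  have hT : ∀ y : Ed d, matVec B y = T y := fun y => rfl
  have bdd : BddAbove (Set.range fun u : Metric.closedBall (0 : Ed d) 1 => ‖matVec B (u : Ed d)‖) := by
    refine ⟨‖T‖, ?_⟩
    rintro _ ⟨⟨u, hu⟩, rfl⟩
    simp only [hT]
    calc ‖T u‖ ≤ ‖T‖ * ‖u‖ := T.le_opNorm u
    _ ≤ ‖T‖ * 1 := by
        refine mul_le_mul_of_nonneg_left ?_ (norm_nonneg _)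
        simpa [Metric.mem_closedBall] using hu
    _ = ‖T‖ := mul_one _
  have h0 : matVec B (0 : Ed d) = 0 := by rw [aux_matVec_eq_lin, map_zero]
  have h := le_ciSup bdd (⟨0, by simp⟩ : Metric.closedBall (0 : Ed d) 1)
  simp only [h0, norm_zero] at h
  exact h

lemma aux_matVec_eq_mulVec {d : ℕ} (B : Matrix (Fin d) (Fin d) ℝ) (x : Ed d) :
    matVec B x = B.mulVec x := rfl

lemma aux_key_id {d : ℕ} (A : Matrix (Fin d) (Fin d) ℝ) (hA : IsUnit A.det) (η : Ed d)
    (k : Fin d → ℤ) :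
    zVec k + matVec A⁻¹ η = matVec A⁻¹ (η + matVec A (zVec k)) := by
  have h : (A⁻¹ * A) = 1 := Matrix.nonsing_inv_mul A hA
  have hh : ∀ x y : Fin d → ℝ, A⁻¹.mulVec (x + y) = A⁻¹.mulVec x + A⁻¹.mulVec y :=
    fun x y => Matrix.mulVec_add _ _ _
  have h1 : matVec A⁻¹ (η + matVec A (zVec k))
      = A⁻¹.mulVec η + A⁻¹.mulVec (A.mulVec (zVec k)) := hh η (A.mulVec (zVec k))
  have h3 : A⁻¹.mulVec (A.mulVec (zVec k)) = zVec k := by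
    rw [Matrix.mulVec_mulVec, h, Matrix.one_mulVec]
  have h2 : (zVec k + matVec A⁻¹ η : Ed d)
      = A⁻¹.mulVec (A.mulVec (zVec k)) + A⁻¹.mulVec η := by
    rw [h3]; rfl
  apply WithLp.ofLp_injective
  rw [h1, h2, add_comm (A⁻¹.mulVec (A.mulVec (zVec k)))]

lemma aux_count_bound {d : ℕ} (c : Fin d → ℝ) (L : ℝ) (hL : 0 ≤ L)
    (f : (Fin d → ℤ) → ℝ≥0∞) (a : ℝ≥0∞)
    (hf : ∀ k, f k ≤ a)
    (hsupp : ∀ k, f k ≠ 0 → ∀ i, |(k i : ℝ) - c i| ≤ L) :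
    ∑' k, f k ≤ ENNReal.ofReal ((2*L+1)^d) * a := by
  classical
  set F : Finset (Fin d → ℤ) :=
    Fintype.piFinset (fun i => Finset.Icc ⌈c i - L⌉ ⌊c i + L⌋) with hF
  have hout : ∀ k ∉ F, f k = 0 := by
    intro k hk
    by_contra hne
    apply hk
    rw [hF, Fintype.mem_piFinset]
    intro i
    have := hsupp k hne i
    rw [abs_le] at this
    rw [Finset.mem_Icc]
    constructor
    · rw [Int.ceil_le]; linarith [this.1]
    · rw [Int.le_floor]; linarith [this.2]
  rw [tsum_eq_sum hout]
  calc ∑ k ∈ F, f k ≤ F.card • a := Finset.sum_le_card_nsmul F f a (fun k _ => hf k)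
  _ = (F.card : ℝ≥0∞) * a := by rw [nsmul_eq_mul]
  _ ≤ ENNReal.ofReal ((2*L+1)^d) * a := by
      refine mul_le_mul_left ?_ a
      have hcard : (F.card : ℝ) ≤ (2*L+1)^d := by
        rw [hF, Fintype.card_piFinset]
        push_cast
        calc ∏ i : Fin d, ((Finset.Icc ⌈c i - L⌉ ⌊c i + L⌋).card : ℝ)
            ≤ ∏ i : Fin d, (2*L+1) := by
              refine Finset.prod_le_prod (fun i _ => by positivity) ?_
              intro i _
              rw [Int.card_Icc]
              rcases le_or_gt (⌈c i - L⌉) (⌊c i + L⌋) with hle | hlt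
              · have hnn : (0:ℤ) ≤ ⌊c i + L⌋ + 1 - ⌈c i - L⌉ := by omega
                have heq : ((⌊c i + L⌋ + 1 - ⌈c i - L⌉).toNat : ℝ)
                    = ((⌊c i + L⌋ : ℝ) + 1 - (⌈c i - L⌉ : ℝ)) := by
                  rw [show (((⌊c i + L⌋ + 1 - ⌈c i - L⌉).toNat : ℕ) : ℝ)
                      = (((⌊c i + L⌋ + 1 - ⌈c i - L⌉).toNat : ℕ) : ℤ) by push_cast; ring,
                    Int.toNat_of_nonneg hnn]
                  push_cast; ring
                rw [heq]
                have h1 : (⌊c i + L⌋ : ℝ) ≤ c i + L := Int.floor_le _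
                have h2 : c i - L ≤ (⌈c i - L⌉ : ℝ) := Int.le_ceil _
                linarith
              · have hz : (⌊c i + L⌋ + 1 - ⌈c i - L⌉).toNat = 0 := by omega
                rw [hz]
                push_cast
                linarith
        _ = (2*L+1)^d := by rw [Finset.prod_const, Finset.card_univ, Fintype.card_fin]
      calc (F.card : ℝ≥0∞) = ENNReal.ofReal (F.card : ℝ) := by
            rw [ENNReal.ofReal_natCast]
      _ ≤ _ := ENNReal.ofReal_le_ofReal hcard

lemma aux_step_ineq (D : ℕ) (x : ℕ) (hx : 1 ≤ x) :
    ((x:ℝ)^(D+1))⁻¹ - (((x:ℝ)+1)^(D+1))⁻¹ ≤ ((D:ℝ)+1) * ((x:ℝ)^(D+2))⁻¹ := by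
  set y : ℝ := (x:ℝ) with hy
  have hy1 : (1:ℝ) ≤ y := by rw [hy]; exact_mod_cast hx
  have hy0 : (0:ℝ) < y := by linarith
  have hgeom : (y+1)^(D+1) - y^(D+1) ≤ ((D:ℝ)+1) * (y+1)^D := by
    have h := geom_sum₂_mul (R := ℝ) (y+1) y (D+1)
    simp only [Nat.add_sub_cancel] at h
    have hsum : ∑ i ∈ Finset.range (D+1), (y+1)^i * y^(D - i) ≤ ((D:ℝ)+1) * (y+1)^D := by
      calc ∑ i ∈ Finset.range (D+1), (y+1)^i * y^(D - i)
          ≤ ∑ i ∈ Finset.range (D+1), (y+1)^D := by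
            refine Finset.sum_le_sum fun i hi => ?_
            rw [Finset.mem_range] at hi
            calc (y+1)^i * y^(D-i) ≤ (y+1)^i * (y+1)^(D-i) := by
                  refine mul_le_mul_of_nonneg_left
                    (pow_le_pow_left₀ (by linarith) (by linarith) _) (by positivity)
            _ = (y+1)^(i + (D-i)) := by rw [pow_add]
            _ = (y+1)^D := by congr 1; omega
      _ = ((D:ℝ)+1) * (y+1)^D := by
            rw [Finset.sum_const, Finset.card_range, nsmul_eq_mul]; push_cast; ring
    calc (y+1)^(D+1) - y^(D+1)
        = (∑ i ∈ Finset.range (D+1), (y+1)^i * y^(D - i)) * ((y+1) - y) := h.symm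
    _ = ∑ i ∈ Finset.range (D+1), (y+1)^i * y^(D - i) := by
            rw [show y + 1 - y = 1 by ring, mul_one]
    _ ≤ ((D:ℝ)+1) * (y+1)^D := hsum
  have heq : (y^(D+1))⁻¹ - ((y+1)^(D+1))⁻¹
      = ((y+1)^(D+1) - y^(D+1)) / (y^(D+1) * (y+1)^(D+1)) := by
    field_simp
  rw [heq]
  calc ((y+1)^(D+1) - y^(D+1)) / (y^(D+1) * (y+1)^(D+1))
      ≤ (((D:ℝ)+1) * (y+1)^D) / (y^(D+1) * (y+1)^(D+1)) := by gcongr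
  _ = ((D:ℝ)+1) / (y^(D+1) * (y+1)) := by
        rw [pow_succ (y+1) D]
        field_simp
  _ ≤ ((D:ℝ)+1) / (y^(D+2)) := by
        apply div_le_div_of_nonneg_left (by positivity) (by positivity)
        calc y^(D+2) = y^(D+1) * y := by rw [pow_succ]
        _ ≤ y^(D+1) * (y+1) := by nlinarith [pow_pos hy0 (D+1)]
  _ = ((D:ℝ)+1) * (y^(D+2))⁻¹ := by rw [div_eq_mul_inv]

lemma aux_ptwise (D : ℕ) (t : ℝ) (ht : 1 ≤ t) :
    ENNReal.ofReal ((t ^ (D+1))⁻¹)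
      ≤ ∑' n : ℕ, (if t < (n:ℝ) + 2
          then ENNReal.ofReal (((D:ℝ)+1) * (((n:ℝ)+1)^(D+2))⁻¹) else 0) := by
  set f : ℕ → ℝ≥0∞ := fun n => (if t < (n:ℝ) + 2
          then ENNReal.ofReal (((D:ℝ)+1) * (((n:ℝ)+1)^(D+2))⁻¹) else 0) with hf
  set m : ℕ := ⌊t⌋.toNat with hm
  have hfl : (1:ℤ) ≤ ⌊t⌋ := by
    rw [Int.le_floor]; exact_mod_cast ht
  have hm1 : 1 ≤ m := by omega
  have hmt : (m:ℝ) ≤ t := by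
    rw [hm]
    calc ((⌊t⌋.toNat : ℕ) : ℝ) = ((⌊t⌋ : ℤ) : ℝ) := by
          rw [show (((⌊t⌋.toNat : ℕ)) : ℝ) = (((⌊t⌋.toNat : ℕ) : ℤ) : ℝ) by push_cast; ring,
            Int.toNat_of_nonneg (by omega)]
    _ ≤ t := Int.floor_le t
  have htm : t < (m:ℝ) + 1 := by
    rw [hm]
    have h1 : t < (⌊t⌋ : ℝ) + 1 := Int.lt_floor_add_one t
    have h2 : ((⌊t⌋.toNat : ℕ) : ℝ) = ((⌊t⌋ : ℤ) : ℝ) := by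
      rw [show (((⌊t⌋.toNat : ℕ)) : ℝ) = (((⌊t⌋.toNat : ℕ) : ℤ) : ℝ) by push_cast; ring,
        Int.toNat_of_nonneg (by omega)]
    rw [h2]; exact h1
  set g : ℕ → ℝ := fun j => ((j:ℝ)^(D+1))⁻¹ with hg
  have hN : ∀ N : ℕ, ENNReal.ofReal (g m - g (m+N)) ≤ ∑' n, f n := by
    intro N
    have htel : g m - g (m+N) = ∑ j ∈ Finset.range N, (g (m+j) - g (m+j+1)) := by
      have h := Finset.sum_range_sub' (fun j => g (m+j)) N
      simp only [Nat.add_zero, ← Nat.add_assoc] at h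
      rw [h]
    have hstep : ∀ j, g (m+j) - g (m+j+1) ≤ ((D:ℝ)+1) * (((m+j:ℕ):ℝ)^(D+2))⁻¹ := by
      intro j
      have hsi := aux_step_ineq D (m+j) (by omega)
      have hc : (((m+j+1:ℕ)):ℝ) = ((m+j:ℕ):ℝ) + 1 := by push_cast; ring
      rw [hg]
      simp only []
      rw [show ((m+j+1 : ℕ):ℝ) = ((m+j:ℕ):ℝ)+1 from hc]
      exact hsi
    calc ENNReal.ofReal (g m - g (m+N))
        ≤ ENNReal.ofReal (∑ j ∈ Finset.range N, ((D:ℝ)+1) * (((m+j:ℕ):ℝ)^(D+2))⁻¹) := by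
          refine ENNReal.ofReal_le_ofReal ?_
          rw [htel]
          exact Finset.sum_le_sum fun j _ => hstep j
    _ = ∑ j ∈ Finset.range N, ENNReal.ofReal (((D:ℝ)+1) * (((m+j:ℕ):ℝ)^(D+2))⁻¹) :=
          ENNReal.ofReal_sum_of_nonneg (fun j _ => by positivity)
    _ = ∑ j ∈ Finset.range N, f (m - 1 + j) := by
          refine Finset.sum_congr rfl fun j _ => ?_
          rw [hf]
          have hcond : t < ((m - 1 + j : ℕ):ℝ) + 2 := by
            have he : ((m - 1 + j : ℕ):ℝ) + 2 = ((m + j : ℕ):ℝ) + 1 := by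
              have hn : m - 1 + j + 1 = m + j := by omega
              push_cast [← hn]
              ring
            rw [he]
            have hmm : (m:ℝ) ≤ ((m+j:ℕ):ℝ) := by
              push_cast; linarith [Nat.cast_nonneg (α := ℝ) j]
            linarith
          simp only [if_pos hcond]
          congr 2
          have hn : m - 1 + j + 1 = m + j := by omega
          push_cast [← hn]
          ring
    _ = ∑ n ∈ Finset.image (fun j => m - 1 + j) (Finset.range N), f n := by
          rw [Finset.sum_image (fun a _ b _ h => by omega)]
    _ ≤ ∑' n, f n := ENNReal.sum_le_tsum _
  have hlim : Tendsto (fun N : ℕ => ENNReal.ofReal (g m - g (m+N))) atTop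
      (𝓝 (ENNReal.ofReal (g m))) := by
    have h1 : Tendsto (fun N : ℕ => ((m+N : ℕ):ℝ)) atTop atTop := by
      refine tendsto_natCast_atTop_atTop.comp ?_
      have h := tendsto_add_atTop_nat m
      have heq : (HAdd.hAdd m : ℕ → ℕ) = fun N : ℕ => N + m := by funext N; omega
      rw [heq]; exact h
    have h2 : Tendsto (fun N : ℕ => ((m+N:ℕ):ℝ)^(D+1)) atTop atTop :=
      (tendsto_pow_atTop (by omega)).comp h1
    have h3 : Tendsto (fun N : ℕ => g (m+N)) atTop (𝓝 0) := h2.inv_tendsto_atTop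
    have h4 : Tendsto (fun N : ℕ => g m - g (m+N)) atTop (𝓝 (g m - 0)) :=
      tendsto_const_nhds.sub h3
    rw [sub_zero] at h4
    exact (ENNReal.continuous_ofReal.tendsto _).comp h4
  have hfinal : ENNReal.ofReal (g m) ≤ ∑' n, f n :=
    le_of_tendsto hlim (Eventually.of_forall hN)
  refine le_trans ?_ hfinal
  refine ENNReal.ofReal_le_ofReal ?_
  rw [hg]
  simp only []
  refine inv_anti₀ (by positivity) ?_
  exact pow_le_pow_left₀ (by positivity) hmt _

lemma aux_real_zeta (N : ℕ) : ∑ n ∈ Finset.range N, (((n:ℝ)+1)^2)⁻¹ ≤ 2 - 2/((N:ℝ)+1) := by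
  induction N with
  | zero => norm_num
  | succ N ih =>
    rw [Finset.sum_range_succ]
    have h1 : (0:ℝ) < (N:ℝ)+1 := by positivity
    have h2 : (0:ℝ) < (N:ℝ)+2 := by positivity
    have step : (((N:ℝ)+1)^2)⁻¹ ≤ 2/((N:ℝ)+1) - 2/((N:ℝ)+2) := by
      rw [div_sub_div _ _ (ne_of_gt h1) (ne_of_gt h2), inv_eq_one_div,
        div_le_div_iff₀ (by positivity) (by positivity)]
      nlinarith
    push_cast
    have he : ((N:ℝ)+1)+1 = (N:ℝ)+2 := by ring
    rw [he]
    linarith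

lemma aux_zeta_bound : ∑' n : ℕ, ENNReal.ofReal ((((n:ℝ)+1)^2)⁻¹) ≤ 2 := by
  rw [ENNReal.tsum_eq_iSup_sum]
  refine iSup_le fun s => ?_
  obtain ⟨N, hN⟩ := Finset.exists_nat_subset_range s
  calc ∑ n ∈ s, ENNReal.ofReal ((((n:ℝ)+1)^2)⁻¹)
      ≤ ∑ n ∈ Finset.range N, ENNReal.ofReal ((((n:ℝ)+1)^2)⁻¹) :=
        Finset.sum_le_sum_of_subset hN
  _ = ENNReal.ofReal (∑ n ∈ Finset.range N, (((n:ℝ)+1)^2)⁻¹) :=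
        (ENNReal.ofReal_sum_of_nonneg (fun n _ => by positivity)).symm
  _ ≤ ENNReal.ofReal 2 := by
        refine ENNReal.ofReal_le_ofReal ?_
        have h := aux_real_zeta N
        have h1 : (0:ℝ) < 2/((N:ℝ)+1) := by positivity
        linarith
  _ = 2 := ENNReal.ofReal_ofNat 2

/-- For every `d ∈ ℕ`, `η ∈ ℝ^d` and `A ∈ GL(d, ℝ)`:
`∑_{k ∈ ℤ^d} (1 + |η + A k|)^{-(d+1)} ≤ (d+1) · 2^{1+2d} · max {1, ‖A⁻¹‖^{d+1}}`. -/
theorem stmt17 (d : ℕ) (η : Ed d) (A : Matrix (Fin d) (Fin d) ℝ) (hA : IsUnit A.det) :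
    ∑' k : Fin d → ℤ, ENNReal.ofReal (((1 + ‖η + matVec A (zVec k)‖) ^ (d + 1))⁻¹)
      ≤ ENNReal.ofReal
          (((d : ℝ) + 1) * 2 ^ (1 + 2 * d) * max 1 (matOpNorm A⁻¹ ^ (d + 1))) := by
  classical
  set N : ℝ := matOpNorm A⁻¹ with hNdef
  set M : ℝ := max 1 N with hMdef
  have hN0 : 0 ≤ N := aux_matOpNorm_nonneg _
  have hM1 : (1:ℝ) ≤ M := le_max_left _ _
  have hMN : N ≤ M := le_max_right _ _
  have hM0 : (0:ℝ) < M := lt_of_lt_of_le one_pos hM1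
  set t : (Fin d → ℤ) → ℝ := fun k => 1 + ‖η + matVec A (zVec k)‖ with htdef
  have ht1 : ∀ k, 1 ≤ t k := fun k => le_add_of_nonneg_right (norm_nonneg _)
  set F : ℕ → (Fin d → ℤ) → ℝ≥0∞ := fun n k =>
    if t k < (n:ℝ) + 2 then ENNReal.ofReal (((d:ℝ)+1) * (((n:ℝ)+1)^(d+2))⁻¹) else 0 with hFdef
  have h1 : ∑' k : Fin d → ℤ, ENNReal.ofReal ((t k ^ (d + 1))⁻¹)
      ≤ ∑' (k : Fin d → ℤ) (n : ℕ), F n k :=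
    ENNReal.tsum_le_tsum (fun k => aux_ptwise d (t k) (ht1 k))
  rw [ENNReal.tsum_comm] at h1
  -- inner sum bound for each n
  have h2 : ∀ n : ℕ, ∑' k, F n k ≤
      ENNReal.ofReal ((2*(M*((n:ℝ)+1))+1)^d)
        * ENNReal.ofReal (((d:ℝ)+1) * (((n:ℝ)+1)^(d+2))⁻¹) := by
    intro n
    refine aux_count_bound (fun i => -(matVec A⁻¹ η i)) (M*((n:ℝ)+1)) (by positivity) _ _
      (fun k => ?_) (fun k hk i => ?_)
    · simp only [hFdef]
      split
      · exact le_rfl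
      · exact zero_le
    · have hcond : t k < (n:ℝ) + 2 := by
        by_contra hc
        exact hk (by rw [hFdef]; simp only [if_neg hc])
      have hnorm : ‖η + matVec A (zVec k)‖ < (n:ℝ) + 1 := by
        rw [htdef] at hcond
        simp only [] at hcond
        linarith
      have hsub : (k i : ℝ) - (-(matVec A⁻¹ η i)) = (zVec k + matVec A⁻¹ η) i := by
        show (k i : ℝ) - (-(matVec A⁻¹ η i)) = zVec k i + matVec A⁻¹ η i
        rw [zVec]; ring
      rw [hsub]
      calc |(zVec k + matVec A⁻¹ η) i| ≤ ‖zVec k + matVec A⁻¹ η‖ :=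
            aux_coord_le_norm _ i
      _ = ‖matVec A⁻¹ (η + matVec A (zVec k))‖ := by rw [aux_key_id A hA η k]
      _ ≤ matOpNorm A⁻¹ * ‖η + matVec A (zVec k)‖ := aux_matVec_norm_le _ _
      _ ≤ M * ((n:ℝ)+1) := by
          refine mul_le_mul hMN hnorm.le (norm_nonneg _) (le_trans zero_le_one hM1)
  -- per-n simplification
  have h3 : ∀ n : ℕ,
      ENNReal.ofReal ((2*(M*((n:ℝ)+1))+1)^d)
          * ENNReal.ofReal (((d:ℝ)+1) * (((n:ℝ)+1)^(d+2))⁻¹)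
      ≤ ENNReal.ofReal (((d:ℝ)+1) * (4*M)^d) * ENNReal.ofReal ((((n:ℝ)+1)^2)⁻¹) := by
    intro n
    rw [← ENNReal.ofReal_mul (by positivity : (0:ℝ) ≤ (2*(M*((n:ℝ)+1))+1)^d),
      ← ENNReal.ofReal_mul (by positivity : (0:ℝ) ≤ ((d:ℝ)+1) * (4*M)^d)]
    refine ENNReal.ofReal_le_ofReal ?_
    have hn0 : (0:ℝ) < (n:ℝ)+1 := by positivity
    have hb : 2*(M*((n:ℝ)+1))+1 ≤ 4*M*((n:ℝ)+1) := by nlinarith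
    calc (2*(M*((n:ℝ)+1))+1)^d * (((d:ℝ)+1) * (((n:ℝ)+1)^(d+2))⁻¹)
        ≤ (4*M*((n:ℝ)+1))^d * (((d:ℝ)+1) * (((n:ℝ)+1)^(d+2))⁻¹) := by
          refine mul_le_mul_of_nonneg_right (pow_le_pow_left₀ (by positivity) hb _) ?_
          positivity
    _ = ((d:ℝ)+1) * (4*M)^d * ((((n:ℝ)+1)^2)⁻¹) := by
          rw [mul_pow, pow_add ((n:ℝ)+1) d 2, mul_inv]
          have hd0 : ((n:ℝ)+1)^d ≠ 0 := by positivity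
          field_simp
  -- combine everything
  calc ∑' k : Fin d → ℤ, ENNReal.ofReal ((t k ^ (d + 1))⁻¹)
      ≤ ∑' (n : ℕ) (k : Fin d → ℤ), F n k := h1
  _ ≤ ∑' n : ℕ, ENNReal.ofReal (((d:ℝ)+1) * (4*M)^d) * ENNReal.ofReal ((((n:ℝ)+1)^2)⁻¹) :=
        ENNReal.tsum_le_tsum (fun n => le_trans (h2 n) (h3 n))
  _ = ENNReal.ofReal (((d:ℝ)+1) * (4*M)^d) * ∑' n : ℕ, ENNReal.ofReal ((((n:ℝ)+1)^2)⁻¹) :=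
        ENNReal.tsum_mul_left
  _ ≤ ENNReal.ofReal (((d:ℝ)+1) * (4*M)^d) * 2 := mul_le_mul_right aux_zeta_bound _
  _ ≤ ENNReal.ofReal (((d : ℝ) + 1) * 2 ^ (1 + 2 * d) * max 1 (N ^ (d + 1))) := by
        rw [show (2:ℝ≥0∞) = ENNReal.ofReal 2 from (ENNReal.ofReal_ofNat 2).symm,
          ← ENNReal.ofReal_mul (by positivity)]
        refine ENNReal.ofReal_le_ofReal ?_
        have hmax : max 1 (N^(d+1)) = M^(d+1) := by
          rcases le_total N 1 with h | h
          · rw [hMdef, max_eq_left h, one_pow, max_eq_left (pow_le_one₀ hN0 h)]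
          · rw [hMdef, max_eq_right h, max_eq_right (one_le_pow₀ h)]
        rw [hmax]
        have hpow : (4*M)^d * 2 = 2^(1+2*d) * M^d := by
          rw [mul_pow, show (4:ℝ) = 2^2 by norm_num, ← pow_mul, pow_add]
          ring
        have hMd : M^d ≤ M^(d+1) := pow_le_pow_right₀ hM1 (by omega)
        calc ((d:ℝ)+1) * (4*M)^d * 2 = ((d:ℝ)+1) * (2^(1+2*d) * M^d) := by
              rw [mul_assoc, hpow]
        _ ≤ ((d:ℝ)+1) * (2^(1+2*d) * M^(d+1)) := by
              refine mul_le_mul_of_nonneg_left ?_ (by positivity)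
              exact mul_le_mul_of_nonneg_left hMd (by positivity)
        _ = ((d:ℝ)+1) * 2^(1+2*d) * M^(d+1) := by ring
end
end
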